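/- arXiv:2304.11344 — 7 statements merged into one kernel-verified Lean document; each statement's English description precedes it below -/
import Mathlib

section
/- For every natural number n ≥ 1, all real numbers a₁, …, aₙ, and every real r > 0, the inequality (∑_{d=1}^{n} 4^{d−1} d² a_d² r^{d−1}) · (∑_{d=1}^{n} d a_d² r^{d−1}) ≥ (∑_{d=1}^{n} 4^{d−1} d a_d² r^{d−1}) · (∑_{d=1}^{n} d² a_d² r^{d−1}) holds. -/
/-- The key Chebyshev-type inequality (2.6) in the paper:
`(∑ 4^{d-1} d² a_d² r^{d-1}) (∑ d a_d² r^{d-1}) ≥ (∑ 4^{d-1} d a_d² r^{d-1}) (∑ d² a_d² r^{d-1})`. -/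
theorem chebyshev_freq_ineq (n : ℕ) (hn : 1 ≤ n) (a : ℕ → ℝ) (r : ℝ) (hr : 0 < r) :
    (∑ d ∈ Finset.Icc 1 n, (4 : ℝ) ^ (d - 1) * (d : ℝ) ^ 2 * (a d) ^ 2 * r ^ (d - 1)) *
      (∑ d ∈ Finset.Icc 1 n, (d : ℝ) * (a d) ^ 2 * r ^ (d - 1)) ≥
    (∑ d ∈ Finset.Icc 1 n, (4 : ℝ) ^ (d - 1) * (d : ℝ) * (a d) ^ 2 * r ^ (d - 1)) *
      (∑ d ∈ Finset.Icc 1 n, (d : ℝ) ^ 2 * (a d) ^ 2 * r ^ (d - 1)) := by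
  set s := Finset.Icc 1 n with hs
  set w : ℕ → ℝ := fun d => (d : ℝ) * (a d) ^ 2 * r ^ (d - 1) with hwdef
  set f : ℕ → ℝ := fun d => (4 : ℝ) ^ (d - 1) with hfdef
  set g : ℕ → ℝ := fun d => (d : ℝ) with hgdef
  have hw0 : ∀ d, 0 ≤ w d := fun d => by
    have := hr.le; positivity
  have key : 0 ≤ ∑ d ∈ s, ∑ e ∈ s, w d * w e * (f d - f e) * (g d - g e) := by
    refine Finset.sum_nonneg fun d _ => Finset.sum_nonneg fun e _ => ?_
    have hprod : 0 ≤ (f d - f e) * (g d - g e) := by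
      rcases le_total d e with h | h
      · have h1 : f d ≤ f e := by
          simp only [hfdef]
          exact pow_le_pow_right₀ (by norm_num) (Nat.sub_le_sub_right h 1)
        have h2 : g d ≤ g e := by simp only [hgdef]; exact_mod_cast h
        nlinarith
      · have h1 : f e ≤ f d := by
          simp only [hfdef]
          exact pow_le_pow_right₀ (by norm_num) (Nat.sub_le_sub_right h 1)
        have h2 : g e ≤ g d := by simp only [hgdef]; exact_mod_cast h
        nlinarith
    have := mul_nonneg (mul_nonneg (hw0 d) (hw0 e)) hprod
    linarith [this]
  have expand : ∑ d ∈ s, ∑ e ∈ s, w d * w e * (f d - f e) * (g d - g e)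
      = 2 * ((∑ d ∈ s, f d * g d * w d) * (∑ e ∈ s, w e)
           - (∑ d ∈ s, f d * w d) * (∑ e ∈ s, g e * w e)) := by
    have step1 : ∑ d ∈ s, ∑ e ∈ s, w d * w e * (f d - f e) * (g d - g e)
        = (∑ d ∈ s, ∑ e ∈ s, (f d * g d * w d * w e - f d * w d * (g e * w e)))
        + (∑ d ∈ s, ∑ e ∈ s, (f e * g e * w e * w d - f e * w e * (g d * w d))) := by
      rw [← Finset.sum_add_distrib]
      refine Finset.sum_congr rfl fun d _ => ?_
      rw [← Finset.sum_add_distrib]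
      refine Finset.sum_congr rfl fun e _ => ?_
      ring
    have step2 : (∑ d ∈ s, ∑ e ∈ s, (f e * g e * w e * w d - f e * w e * (g d * w d)))
        = ∑ d ∈ s, ∑ e ∈ s, (f d * g d * w d * w e - f d * w d * (g e * w e)) := by
      rw [Finset.sum_comm]
    rw [step1, step2, Finset.sum_mul_sum, Finset.sum_mul_sum, ← Finset.sum_sub_distrib]
    simp_rw [← Finset.sum_sub_distrib]
    ring
  have goal_eq : (∑ d ∈ s, (4 : ℝ) ^ (d - 1) * (d : ℝ) ^ 2 * (a d) ^ 2 * r ^ (d - 1))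
      = ∑ d ∈ s, f d * g d * w d := by
    refine Finset.sum_congr rfl fun d _ => ?_; simp only [hfdef, hgdef, hwdef]; ring
  have goal_eq2 : (∑ d ∈ s, (d : ℝ) * (a d) ^ 2 * r ^ (d - 1)) = ∑ e ∈ s, w e := rfl
  have goal_eq3 : (∑ d ∈ s, (4 : ℝ) ^ (d - 1) * (d : ℝ) * (a d) ^ 2 * r ^ (d - 1))
      = ∑ d ∈ s, f d * w d := by
    refine Finset.sum_congr rfl fun d _ => ?_; simp only [hfdef, hwdef]; ring
  have goal_eq4 : (∑ d ∈ s, (d : ℝ) ^ 2 * (a d) ^ 2 * r ^ (d - 1)) = ∑ e ∈ s, g e * w e := by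
    refine Finset.sum_congr rfl fun d _ => ?_; simp only [hgdef, hwdef]; ring
  rw [ge_iff_le, goal_eq, goal_eq2, goal_eq3, goal_eq4]
  nlinarith [key, expand]
end

section
/- There exists a universal constant C > 0 with the following property. For every natural number Λ ≥ 1, every choice of points z₁, …, z_Λ ∈ ℂ, and every r > 0, letting P(z) = ∏_{j=1}^{Λ} (z − z_j), the planar Lebesgue measure of the set { x ∈ B(0,1/2) : N_P(x,r) > 1/2 } is at most C·Λ²·r². -/
open MeasureTheory Metric Set Finset

/-- The frequency function `N_F(x,r) = log₂( (⨍_{B(x,2r)} |F|²) / (⨍_{B(x,r)} |F|²) )`. -/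
noncomputable def freq (F : ℂ → ℂ) (x : ℂ) (r : ℝ) : ℝ :=
  Real.logb 2 ((⨍ z in ball x (2 * r), ‖F z‖ ^ 2 ∂volume) /
    (⨍ z in ball x r, ‖F z‖ ^ 2 ∂volume))

lemma theta_int_zero (n : ℤ) (hn : n ≠ 0) :
    (∫ x in (-Real.pi)..(Real.pi), Complex.exp ((n : ℂ) * Complex.I * x)) = 0 := by
  rw [integral_exp_mul_complex (by simp [Complex.ext_iff, hn] : ((n:ℂ) * Complex.I) ≠ 0)]
  have h1 : (n:ℂ) * Complex.I * (Real.pi:ℝ) = n * (Real.pi * Complex.I) := by ring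
  have h2 : (n:ℂ) * Complex.I * ((-Real.pi:ℝ):ℂ) = ((-n : ℤ):ℂ) * (Real.pi * Complex.I) := by
    push_cast; ring
  rw [h1, h2, Complex.exp_int_mul, Complex.exp_int_mul, Complex.exp_pi_mul_I, zpow_neg]
  have : ((-1 : ℂ)) ^ n = 1 ∨ ((-1 : ℂ)) ^ n = -1 := n.even_or_odd.imp
    (fun h => h.neg_one_zpow) (fun h => Odd.neg_one_zpow h)
  rcases this with h | h <;> norm_num [h]

lemma disk_monomial (ρ : ℝ) (hρ : 0 < ρ) (k l : ℕ) :
    ∫ w in ball (0:ℂ) ρ, w ^ k * (starRingEnd ℂ) w ^ l =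
      if k = l then ((Real.pi * ρ ^ (2*k+2) / (k+1) : ℝ) : ℂ) else 0 := by
  have hπ := Real.pi_pos
  set f : ℂ → ℂ := fun w => w ^ k * (starRingEnd ℂ) w ^ l with hf
  set c : ℂ := ((k : ℤ) - (l : ℤ) : ℤ) * Complex.I with hc
  set R : Set (ℝ × ℝ) := Set.Ioo (0:ℝ) ρ ×ˢ Set.Ioo (-Real.pi) Real.pi with hR
  set G : ℝ × ℝ → ℂ := fun p => (p.1 ^ (k+l+1) : ℝ) • Complex.exp (c * p.2) with hG
  have key : ∫ p in polarCoord.target, p.1 • (Set.indicator (ball (0:ℂ) ρ) f)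
      (Complex.polarCoord.symm p) = ∫ p in polarCoord.target, Set.indicator R G p := by
    apply setIntegral_congr_fun polarCoord.open_target.measurableSet
    rintro ⟨s, θ⟩ ⟨hs, hθ⟩
    simp only [polarCoord_target, Set.mem_Ioi] at hs hθ ⊢
    have habs : ‖Complex.polarCoord.symm (s, θ)‖ = s := by
      rw [Complex.norm_polarCoord_symm]; exact abs_of_pos hs
    have hsymm : Complex.polarCoord.symm (s, θ) = (s:ℂ) * Complex.exp (θ * Complex.I) := by
      rw [Complex.polarCoord_symm_apply, Complex.exp_mul_I]; norm_num
    by_cases hlt : s < ρ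
    · have hdist : dist (Complex.polarCoord.symm (s, θ)) (0:ℂ) = s := by
        rw [Complex.dist_eq, sub_zero, habs]
      have hmem : Complex.polarCoord.symm (s, θ) ∈ ball (0:ℂ) ρ := by
        rw [mem_ball, hdist]; exact hlt
      have hmemR : (s, θ) ∈ R := ⟨⟨hs, hlt⟩, hθ⟩
      rw [Set.indicator_of_mem hmem, Set.indicator_of_mem hmemR]
      simp only [hf, hG, hsymm]
      have hconj : (starRingEnd ℂ) ((s:ℂ) * Complex.exp (θ * Complex.I)) =
          (s:ℂ) * Complex.exp (-(θ * Complex.I)) := by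
        rw [map_mul, Complex.conj_ofReal, ← Complex.exp_conj]
        congr 2
        simp [Complex.ext_iff]
      rw [hconj]
      rw [mul_pow, mul_pow, ← Complex.exp_nat_mul, ← Complex.exp_nat_mul]
      have : Complex.exp ((k:ℂ) * (θ * Complex.I)) * Complex.exp ((l:ℂ) * -(θ * Complex.I))
          = Complex.exp (c * θ) := by
        rw [← Complex.exp_add]; congr 1; rw [hc]; push_cast; ring
      rw [Complex.real_smul, Complex.real_smul, ← this]
      push_cast
      ring
    · have hdist : dist (Complex.polarCoord.symm (s, θ)) (0:ℂ) = s := by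
        rw [Complex.dist_eq, sub_zero, habs]
      have hmem : Complex.polarCoord.symm (s, θ) ∉ ball (0:ℂ) ρ := by
        rw [mem_ball, hdist]; exact hlt
      have hmemR : (s, θ) ∉ R := fun h => hlt h.1.2
      rw [Set.indicator_of_notMem hmem, Set.indicator_of_notMem hmemR, smul_zero]
  have hRsub : R ⊆ polarCoord.target := by
    rintro ⟨s, θ⟩ ⟨hs, hθ⟩
    exact ⟨hs.1, hθ⟩
  have hRmeas : MeasurableSet R := measurableSet_Ioo.prod measurableSet_Ioo
  calc ∫ w in ball (0:ℂ) ρ, f w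
      = ∫ w, Set.indicator (ball (0:ℂ) ρ) f w := (integral_indicator measurableSet_ball).symm
    _ = ∫ p in polarCoord.target, p.1 • (Set.indicator (ball (0:ℂ) ρ) f)
          (Complex.polarCoord.symm p) := (Complex.integral_comp_polarCoord_symm _).symm
    _ = ∫ p in polarCoord.target, Set.indicator R G p := key
    _ = ∫ p in R, G p := by
        rw [setIntegral_indicator hRmeas, Set.inter_eq_right.2 hRsub]
    _ = if k = l then ((Real.pi * ρ ^ (2*k+2) / (k+1) : ℝ) : ℂ) else 0 := by
        have hπ := Real.pi_pos
        have hRmeas : MeasurableSet R := by rw [hR]; exact measurableSet_Ioo.prod measurableSet_Ioo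
        have hGc : Continuous G := by
          rw [hG]
          exact ((continuous_fst.pow _)).smul
            ((Complex.continuous_exp.comp ((continuous_const.mul
              (Complex.continuous_ofReal.comp continuous_snd)))))
        have hre : ∀ (θ : ℝ), (c * (θ:ℂ)).re = 0 := by
          intro θ; rw [hc]; simp
        have hInt : IntegrableOn G R volume := by
          apply Measure.integrableOn_of_bounded (M := ρ ^ (k+l+1))
          · rw [hR, Measure.volume_eq_prod, Measure.prod_prod, Real.volume_Ioo, Real.volume_Ioo]
            exact ENNReal.mul_ne_top ENNReal.ofReal_ne_top ENNReal.ofReal_ne_top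
          · exact hGc.aestronglyMeasurable
          · filter_upwards [ae_restrict_mem hRmeas]
            rintro ⟨s, θ⟩ hmem
            rw [hR] at hmem
            obtain ⟨hs, hθ⟩ := hmem
            rw [hG]
            simp only [norm_smul, Real.norm_eq_abs, Complex.norm_exp, hre,
              Real.exp_zero, mul_one]
            rw [abs_pow, abs_of_pos hs.1]
            exact pow_le_pow_left₀ hs.1.le hs.2.le _
        rw [hR, Measure.volume_eq_prod] at hInt ⊢
        rw [setIntegral_prod _ hInt]
        simp only [hG]
        have inner_eq : ∀ s : ℝ, (∫ θ in Set.Ioo (-Real.pi) Real.pi,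
            (s ^ (k+l+1) : ℝ) • Complex.exp (c * θ)) =
            (s ^ (k+l+1) : ℝ) • ∫ θ in Set.Ioo (-Real.pi) Real.pi, Complex.exp (c * θ) := by
          intro s; exact integral_smul _ _
        simp only [inner_eq]
        have hIoo : (∫ θ in Set.Ioo (-Real.pi) Real.pi, Complex.exp (c * θ)) =
            ∫ θ in (-Real.pi)..Real.pi, Complex.exp (c * θ) := by
          rw [intervalIntegral.integral_of_le (by linarith), integral_Ioc_eq_integral_Ioo]
        rw [hIoo]
        by_cases hkl : k = l
        · subst hkl
          have hc0 : c = 0 := by rw [hc]; simp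
          simp only [hc0, zero_mul, Complex.exp_zero]
          rw [intervalIntegral.integral_const]
          have : ∫ s in Set.Ioo (0:ℝ) ρ, (s ^ (k+k+1) : ℝ) • ((Real.pi - -Real.pi : ℝ) • (1:ℂ)) =
              (∫ s in Set.Ioo (0:ℝ) ρ, (s ^ (k+k+1) : ℝ)) • ((Real.pi - -Real.pi : ℝ) • (1:ℂ)) :=
            integral_smul_const _ _
          rw [this]
          have hpow : (∫ s in Set.Ioo (0:ℝ) ρ, (s ^ (k+k+1) : ℝ)) = ρ ^ (2*k+2) / (2*k+2) := by
            rw [← integral_Ioc_eq_integral_Ioo, ← intervalIntegral.integral_of_le hρ.le,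
              integral_pow]
            norm_num <;> ring_nf
          rw [hpow]
          simp only [if_true]
          rw [smul_smul, Complex.real_smul, mul_one]
          push_cast
          have h1 : ((k:ℂ)+1) ≠ 0 := Nat.cast_add_one_ne_zero k
          have h2 : (2*(k:ℂ)+2) ≠ 0 := fun h => h1 (by linear_combination h / 2)
          field_simp
          ring
        · have hn : ((k:ℤ) - l) ≠ 0 := by
            intro h
            exact hkl (by exact_mod_cast sub_eq_zero.1 h)
          rw [show (∫ θ in (-Real.pi)..Real.pi, Complex.exp (c * θ)) = 0 from hc ▸ theta_int_zero _ hn]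
          simp [hkl]

lemma cont_int (ρ : ℝ) (f : ℂ → ℂ) (hf : Continuous f) :
    IntegrableOn f (ball (0:ℂ) ρ) volume :=
  (hf.continuousOn.integrableOn_compact (isCompact_closedBall _ _)).mono_set ball_subset_closedBall

lemma disk_sq_expansion (ρ : ℝ) (hρ : 0 < ρ) (n : ℕ) (a : ℕ → ℂ) :
    ∫ w in ball (0:ℂ) ρ, ‖∑ k ∈ range n, a k * w ^ k‖ ^ 2 =
      ∑ k ∈ range n, ‖a k‖ ^ 2 * (Real.pi * ρ ^ (2*k+2) / (k+1)) := by
  have key : ∫ w in ball (0:ℂ) ρ, (∑ k ∈ range n, a k * w ^ k) *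
      (starRingEnd ℂ) (∑ k ∈ range n, a k * w ^ k) =
      ((∑ k ∈ range n, ‖a k‖ ^ 2 * (Real.pi * ρ ^ (2*k+2) / (k+1)) : ℝ) : ℂ) := by
    have expand : ∀ w : ℂ, (∑ k ∈ range n, a k * w ^ k) *
        (starRingEnd ℂ) (∑ k ∈ range n, a k * w ^ k) =
        ∑ k ∈ range n, ∑ l ∈ range n,
          (a k * (starRingEnd ℂ) (a l)) * (w ^ k * (starRingEnd ℂ) w ^ l) := by
      intro w
      rw [map_sum, Finset.sum_mul_sum]
      refine Finset.sum_congr rfl fun k _ => Finset.sum_congr rfl fun l _ => ?_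
      rw [map_mul, map_pow]
      ring
    simp_rw [expand]
    rw [integral_finset_sum]
    · have : ∀ k ∈ range n, (∫ w in ball (0:ℂ) ρ, ∑ l ∈ range n,
          (a k * (starRingEnd ℂ) (a l)) * (w ^ k * (starRingEnd ℂ) w ^ l)) =
          (a k * (starRingEnd ℂ) (a k)) * ((Real.pi * ρ ^ (2*k+2) / (k+1) : ℝ) : ℂ) := by
        intro k hk
        rw [integral_finset_sum]
        · have : ∀ l ∈ range n, (∫ w in ball (0:ℂ) ρ,
              (a k * (starRingEnd ℂ) (a l)) * (w ^ k * (starRingEnd ℂ) w ^ l)) =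
              (a k * (starRingEnd ℂ) (a l)) *
                (if k = l then ((Real.pi * ρ ^ (2*k+2) / (k+1) : ℝ) : ℂ) else 0) := by
            intro l _
            rw [integral_const_mul, disk_monomial ρ hρ]
          rw [Finset.sum_congr rfl this]
          simp only [mul_ite, mul_zero]
          rw [Finset.sum_ite_eq (range n) k]
          simp [hk]
        · intro l _
          exact (cont_int _ _ (by continuity)).const_mul _
      rw [Finset.sum_congr rfl this]
      have habs : ∀ k : ℕ, a k * (starRingEnd ℂ) (a k) = ((‖a k‖ ^ 2 : ℝ) : ℂ) := by
        intro k
        rw [Complex.mul_conj, Complex.sq_norm]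
      simp_rw [habs]
      push_cast
      ring
    · intro k _
      apply integrable_finset_sum
      intro l _
      exact (cont_int _ _ (by continuity)).const_mul _
  have lhs_eq : ∀ w : ℂ, ((‖∑ k ∈ range n, a k * w ^ k‖ ^ 2 : ℝ) : ℂ) =
      (∑ k ∈ range n, a k * w ^ k) * (starRingEnd ℂ) (∑ k ∈ range n, a k * w ^ k) := by
    intro w
    rw [Complex.mul_conj, Complex.sq_norm]
  have h2 := key
  rw [← integral_congr_ae (ae_of_all _ fun w => (lhs_eq w))] at h2
  have h3 : (∫ w in ball (0:ℂ) ρ, ((‖∑ k ∈ range n, a k * w ^ k‖ ^ 2 : ℝ) : ℂ)) =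
      ((∫ w in ball (0:ℂ) ρ, ‖∑ k ∈ range n, a k * w ^ k‖ ^ 2 : ℝ) : ℂ) :=
    integral_ofReal
  rw [h3] at h2
  exact_mod_cast h2

lemma prod_add_expand {R : Type*} [CommSemiring R] {Λ : ℕ} (c : Fin Λ → R) (w : R) :
    ∏ j, (c j + w) = ∑ k ∈ range (Λ+1),
      (∑ T ∈ powersetCard (Λ - k) (univ : Finset (Fin Λ)), ∏ j ∈ T, c j) * w ^ k := by
  rw [Finset.prod_add, Finset.powerset_card_disjiUnion]
  erw [Finset.sum_disjiUnion]
  rw [Finset.card_univ, Fintype.card_fin]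
  have step : ∀ i ∈ range (Λ+1), (∑ T ∈ powersetCard i (univ : Finset (Fin Λ)),
      (∏ j ∈ T, c j) * ∏ j ∈ (univ : Finset (Fin Λ)) \ T, w)
      = (∑ T ∈ powersetCard i (univ : Finset (Fin Λ)), ∏ j ∈ T, c j) * w ^ (Λ - i) := by
    intro i hi
    rw [Finset.sum_mul]
    refine Finset.sum_congr rfl fun T hT => ?_
    rw [Finset.mem_powersetCard] at hT
    rw [Finset.prod_const, Finset.card_sdiff_of_subset hT.1, Finset.card_univ, Fintype.card_fin, hT.2]
  rw [Finset.sum_congr rfl step]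
  have : ∀ k ∈ range (Λ+1), (∑ T ∈ powersetCard (Λ - k) (univ : Finset (Fin Λ)),
      ∏ j ∈ T, c j) * w ^ k
      = (fun i => (∑ T ∈ powersetCard i (univ : Finset (Fin Λ)), ∏ j ∈ T, c j) * w ^ (Λ - i))
        (Λ - k) := by
    intro k hk
    rw [Finset.mem_range, Nat.lt_succ_iff] at hk
    simp only []
    rw [Nat.sub_sub_self hk]
  rw [Finset.sum_congr rfl this]
  simpa using (Finset.sum_range_reflect (fun i =>
    (∑ T ∈ powersetCard i (univ : Finset (Fin Λ)), ∏ j ∈ T, c j) * w ^ (Λ - i)) (Λ+1)).symm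

noncomputable def coefA {Λ : ℕ} (z : Fin Λ → ℂ) (x : ℂ) (k : ℕ) : ℂ :=
  ∑ T ∈ powersetCard (Λ - k) (univ : Finset (Fin Λ)), ∏ j ∈ T, (x - z j)

lemma integral_ball_translate (x : ℂ) (ρ : ℝ) (f : ℂ → ℝ) :
    ∫ w in ball x ρ, f w = ∫ w in ball (0:ℂ) ρ, f (x + w) := by
  have hpre : (fun w => x + w) ⁻¹' ball x ρ = ball (0:ℂ) ρ := by
    ext w
    simp [mem_ball, dist_eq_norm]
  rw [← hpre, (measurePreserving_add_left volume x).setIntegral_preimage_emb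
    (measurableEmbedding_addLeft x) f _]

lemma vol_ball_toReal (x : ℂ) (ρ : ℝ) (hρ : 0 < ρ) :
    (volume (ball x ρ)).toReal = Real.pi * ρ ^ 2 := by
  rw [Complex.volume_ball]
  rw [ENNReal.toReal_mul, ENNReal.toReal_pow, ENNReal.toReal_ofReal hρ.le]
  simp [mul_comm]

lemma avg_eq {Λ : ℕ} (z : Fin Λ → ℂ) (x : ℂ) (ρ : ℝ) (hρ : 0 < ρ) :
    ⨍ w in ball x ρ, ‖∏ j, (w - z j)‖ ^ 2 ∂volume =
      ∑ k ∈ range (Λ+1), ‖coefA z x k‖ ^ 2 * ρ ^ (2*k) / (k+1) := by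
  have hπ := Real.pi_pos
  rw [setAverage_eq, integral_ball_translate]
  have hpt : ∀ w : ℂ, ‖∏ j, ((x + w) - z j)‖ ^ 2 =
      ‖∑ k ∈ range (Λ+1), coefA z x k * w ^ k‖ ^ 2 := by
    intro w
    congr 2
    have : ∀ j, (x + w) - z j = (x - z j) + w := fun j => by ring
    rw [Finset.prod_congr rfl fun j _ => this j]
    exact prod_add_expand _ _
  simp_rw [hpt]
  rw [disk_sq_expansion ρ hρ, measureReal_def, vol_ball_toReal x ρ hρ, smul_eq_mul, Finset.mul_sum]
  refine Finset.sum_congr rfl fun k _ => ?_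
  have h1 : ρ ^ (2*k+2) = ρ ^ (2*k) * ρ ^ 2 := pow_add ρ (2*k) 2
  rw [h1]
  have hk1 : ((k:ℝ)+1) ≠ 0 := by positivity
  field_simp

lemma exp_quarter : Real.exp (1/4 : ℝ) ≤ 4/3 := by
  have h := Real.add_one_le_exp (-(1/4:ℝ))
  rw [Real.exp_neg] at h
  have hpos : (0:ℝ) < Real.exp (1/4) := Real.exp_pos _
  rw [inv_eq_one_div] at h
  have h2 : (3/4 : ℝ) ≤ 1 / Real.exp (1/4) := by linarith
  calc Real.exp (1/4) = 1 / (1 / Real.exp (1/4)) := by field_simp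
    _ ≤ 1 / (3/4 : ℝ) := one_div_le_one_div_of_le (by norm_num) h2
    _ = 4/3 := by norm_num

lemma powersetCard_top (Λ : ℕ) :
    powersetCard Λ (univ : Finset (Fin Λ)) = {(univ : Finset (Fin Λ))} := by
  ext T
  rw [Finset.mem_powersetCard, Finset.mem_singleton]
  constructor
  · rintro ⟨hsub, hc⟩
    apply Finset.eq_univ_of_card
    rw [hc, Fintype.card_fin]
  · rintro rfl
    exact ⟨subset_rfl, by simp⟩

lemma coefA_zero {Λ : ℕ} (z : Fin Λ → ℂ) (x : ℂ) :
    coefA z x 0 = ∏ j, (x - z j) := by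
  rw [coefA, Nat.sub_zero, powersetCard_top, Finset.sum_singleton]

lemma freq_le_of_S_small {Λ : ℕ} (z : Fin Λ → ℂ) (x : ℂ) (r : ℝ) (hr : 0 < r)
    (hroot : ∀ j, x ≠ z j)
    (hS : ∑ j, (dist x (z j))⁻¹ ≤ 1 / (8*r)) :
    freq (fun w => ∏ j, (w - z j)) x r ≤ 1/2 := by
  set p : ℝ := ∏ j, ‖x - z j‖ with hp_def
  have hfac : ∀ j, 0 < ‖x - z j‖ := fun j => by
    rw [norm_pos_iff]
    exact sub_ne_zero.2 (hroot j)
  have hp : 0 < p := Finset.prod_pos fun j _ => hfac j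
  set Q : ℝ → ℝ := fun ρ => ∑ k ∈ range (Λ+1),
    ‖coefA z x k‖ ^ 2 * ρ ^ (2*k) / (k+1) with hQ_def
  have hQapp : ∀ ρ : ℝ, Q ρ = ∑ k ∈ range (Λ+1),
      ‖coefA z x k‖ ^ 2 * ρ ^ (2*k) / (k+1) := fun ρ => rfl
  have hterm0 : ∀ ρ : ℝ, ‖coefA z x 0‖ ^ 2 * ρ ^ (2*0) / ((0:ℕ)+1) = p ^ 2 := by
    intro ρ
    rw [coefA_zero]
    push_cast
    rw [norm_prod]
    simp [hp_def]
  have h0mem : (0:ℕ) ∈ range (Λ+1) := Finset.mem_range.2 (Nat.succ_pos Λ)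
  have hQ_ge : ∀ ρ : ℝ, p ^ 2 ≤ Q ρ := by
    intro ρ
    rw [hQapp ρ, ← hterm0 ρ]
    exact Finset.single_le_sum
      (f := fun k => ‖coefA z x k‖ ^ 2 * ρ ^ (2*k) / (k+1))
      (fun k _ => div_nonneg (mul_nonneg (sq_nonneg _) ((even_two_mul k).pow_nonneg ρ))
        (by positivity)) h0mem
  have hQpos : ∀ ρ : ℝ, 0 < Q ρ := fun ρ => lt_of_lt_of_le (by positivity) (hQ_ge ρ)
  set Ab : ℕ → ℝ := fun k => ∑ T ∈ powersetCard (Λ - k) (univ : Finset (Fin Λ)),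
    ∏ j ∈ T, ‖x - z j‖ with hAb_def
  have hAb_nonneg : ∀ k, 0 ≤ Ab k := fun k =>
    Finset.sum_nonneg fun T _ => Finset.prod_nonneg fun j _ => (hfac j).le
  have habs_le : ∀ k, ‖coefA z x k‖ ≤ Ab k := by
    intro k
    rw [coefA, hAb_def]
    refine le_trans (norm_sum_le _ _) (Finset.sum_le_sum fun T _ => ?_)
    rw [norm_prod]
  have hAb0 : Ab 0 = p := by
    rw [hAb_def, hp_def]
    simp only [Nat.sub_zero]
    rw [powersetCard_top, Finset.sum_singleton]
  set D : ℝ := ∑ k ∈ range (Λ+1), Ab k * (2*r) ^ k with hD_def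
  have hD_eq : D = ∏ j, (‖x - z j‖ + 2*r) :=
    (prod_add_expand (fun j => ‖x - z j‖) (2*r)).symm
  have hD2 : D = p + ∑ k ∈ (range (Λ+1)).erase 0, Ab k * (2*r) ^ k := by
    rw [hD_def, ← Finset.add_sum_erase _ _ h0mem, pow_zero, mul_one, hAb0]
  have hD_ge : p ≤ D := by
    rw [hD2]
    have : 0 ≤ ∑ k ∈ (range (Λ+1)).erase 0, Ab k * (2*r) ^ k :=
      Finset.sum_nonneg fun k _ => mul_nonneg (hAb_nonneg k) (by positivity)
    linarith
  have hD_le : D ≤ p * (4/3) := by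
    rw [hD_eq]
    have hstep : ∀ j : Fin Λ, ‖x - z j‖ + 2*r ≤
        ‖x - z j‖ * Real.exp (2*r * (‖x - z j‖)⁻¹) := by
      intro j
      have hne := (hfac j).ne'
      have h1 : 1 + 2*r * (‖x - z j‖)⁻¹ ≤
          Real.exp (2*r * (‖x - z j‖)⁻¹) := by
        have := Real.add_one_le_exp (2*r * (‖x - z j‖)⁻¹)
        linarith
      have heq : ‖x - z j‖ * (1 + 2*r * (‖x - z j‖)⁻¹) =
          ‖x - z j‖ + 2*r := by
        field_simp
      calc ‖x - z j‖ + 2*r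
          = ‖x - z j‖ * (1 + 2*r * (‖x - z j‖)⁻¹) := heq.symm
        _ ≤ ‖x - z j‖ * Real.exp (2*r * (‖x - z j‖)⁻¹) :=
            mul_le_mul_of_nonneg_left h1 (hfac j).le
    calc ∏ j, (‖x - z j‖ + 2*r)
        ≤ ∏ j, (‖x - z j‖ * Real.exp (2*r * (‖x - z j‖)⁻¹)) :=
          Finset.prod_le_prod (fun j _ => by positivity) (fun j _ => hstep j)
      _ = p * Real.exp (∑ j, 2*r * (‖x - z j‖)⁻¹) := by
          rw [Finset.prod_mul_distrib, ← Real.exp_sum, hp_def]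
      _ ≤ p * Real.exp (1/4) := by
          refine mul_le_mul_of_nonneg_left ?_ hp.le
          apply Real.exp_le_exp.2
          have heq2 : ∑ j, 2*r * (‖x - z j‖)⁻¹ = 2*r * ∑ j, (dist x (z j))⁻¹ := by
            rw [Finset.mul_sum]
            exact Finset.sum_congr rfl fun j _ => by rw [Complex.dist_eq]
          rw [heq2]
          calc 2*r * ∑ j, (dist x (z j))⁻¹ ≤ 2*r * (1/(8*r)) :=
                mul_le_mul_of_nonneg_left hS (by linarith)
            _ = 1/4 := by field_simp; ring
      _ ≤ p * (4/3) := mul_le_mul_of_nonneg_left exp_quarter hp.le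
  have hQ2 : Q (2*r) ≤ (10/9) * p ^ 2 := by
    have hsplit : Q (2*r) = p ^ 2 + ∑ k ∈ (range (Λ+1)).erase 0,
        ‖coefA z x k‖ ^ 2 * (2*r) ^ (2*k) / (k+1) := by
      rw [hQapp (2*r), ← Finset.add_sum_erase _ _ h0mem, hterm0 (2*r)]
    have hterm_le : ∀ k ∈ (range (Λ+1)).erase 0,
        ‖coefA z x k‖ ^ 2 * (2*r) ^ (2*k) / (k+1) ≤ (Ab k * (2*r) ^ k) ^ 2 := by
      intro k _
      have hk1 : (1:ℝ) ≤ (k:ℝ) + 1 := by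
        have : (0:ℝ) ≤ (k:ℝ) := Nat.cast_nonneg k
        linarith
      have h1 : ‖coefA z x k‖ ^ 2 * (2*r) ^ (2*k) / ((k:ℝ)+1) ≤
          ‖coefA z x k‖ ^ 2 * (2*r) ^ (2*k) :=
        div_le_self (by positivity) hk1
      refine h1.trans ?_
      have hpow2 : (2*r) ^ (2*k) = ((2*r) ^ k) ^ 2 := by rw [mul_comm 2 k, pow_mul]
      rw [hpow2, ← mul_pow]
      apply pow_le_pow_left₀ (by positivity)
      exact mul_le_mul_of_nonneg_right (habs_le k) (by positivity)
    have hsum_le : ∑ k ∈ (range (Λ+1)).erase 0,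
        ‖coefA z x k‖ ^ 2 * (2*r) ^ (2*k) / (k+1) ≤
        (∑ k ∈ (range (Λ+1)).erase 0, Ab k * (2*r) ^ k) ^ 2 :=
      (Finset.sum_le_sum hterm_le).trans (Finset.sum_sq_le_sq_sum_of_nonneg
        fun k _ => mul_nonneg (hAb_nonneg k) (by positivity))
    have herase : ∑ k ∈ (range (Λ+1)).erase 0, Ab k * (2*r) ^ k = D - p := by
      rw [hD2]; ring
    rw [herase] at hsum_le
    have hDp : (D - p) ^ 2 ≤ p ^ 2 / 9 := by
      have h1 : D - p ≤ p / 3 := by linarith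
      have h2 : 0 ≤ D - p := by linarith
      calc (D - p) ^ 2 ≤ (p/3) ^ 2 := pow_le_pow_left₀ h2 h1 2
        _ = p ^ 2 / 9 := by ring
    rw [hsplit]
    linarith
  have havg2 : (⨍ w in ball x (2 * r), ‖∏ j, (w - z j)‖ ^ 2 ∂volume) = Q (2*r) := by
    rw [avg_eq z x (2*r) (by linarith), hQapp]
  have havg1 : (⨍ w in ball x r, ‖∏ j, (w - z j)‖ ^ 2 ∂volume) = Q r := by
    rw [avg_eq z x r hr, hQapp]
  have hfreq : freq (fun w => ∏ j, (w - z j)) x r = Real.logb 2 (Q (2*r) / Q r) := by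
    simp only [freq]
    rw [havg2, havg1]
  rw [hfreq]
  have hratio : Q (2*r) / Q r ≤ Real.sqrt 2 := by
    have hps : (0:ℝ) < p ^ 2 := by positivity
    have c1 : Q (2*r) / Q r ≤ Q (2*r) / p ^ 2 :=
      div_le_div_of_nonneg_left (hQpos (2*r)).le hps (hQ_ge r)
    have c2 : Q (2*r) / p ^ 2 ≤ 10/9 := by
      rw [div_le_iff₀ hps]
      linarith
    have c3 : (10/9 : ℝ) ≤ Real.sqrt 2 := by
      rw [show (10/9:ℝ) = Real.sqrt ((10/9)^2) from (Real.sqrt_sq (by norm_num)).symm]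
      exact Real.sqrt_le_sqrt (by norm_num)
    linarith
  have hposratio : 0 < Q (2*r) / Q r := div_pos (hQpos _) (hQpos _)
  have hhalf : Real.logb 2 (Real.sqrt 2) = 1/2 := by
    have hl : Real.log 2 ≠ 0 := (Real.log_pos one_lt_two).ne'
    rw [Real.logb, Real.log_sqrt zero_le_two]
    field_simp
  rw [← hhalf]
  exact Real.logb_le_logb_of_le one_lt_two hposratio hratio

lemma lint_ball_inv (zc : ℂ) (ρ : ℝ) (hρ : 0 < ρ) :
    ∫⁻ x in ball zc ρ, ENNReal.ofReal (dist x zc)⁻¹ ≤ ENNReal.ofReal (4 * Real.pi * ρ) := by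
  have hπ := Real.pi_pos
  set g : ℕ → ℂ → ENNReal := fun i => (ball zc (ρ * 2⁻¹ ^ i)).indicator
    (fun _ => ENNReal.ofReal (2 ^ (i+1) / ρ)) with hg_def
  have hgmeas : ∀ i, Measurable (g i) := fun i =>
    (measurable_const).indicator measurableSet_ball
  have hpt : ∀ x ∈ ball zc ρ, ENNReal.ofReal (dist x zc)⁻¹ ≤ ∑' i, g i x := by
    intro x hx
    rcases eq_or_lt_of_le (dist_nonneg (x := x) (y := zc)) with hd | hd
    · rw [← hd]
      simp
    · -- find minimal N with ρ * 2⁻¹ ^ N ≤ d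
      have hdρ : dist x zc < ρ := mem_ball.1 hx
      have hex : ∃ N : ℕ, ρ * 2⁻¹ ^ N ≤ dist x zc := by
        obtain ⟨n, hn⟩ := exists_pow_lt_of_lt_one (div_pos hd hρ) (by norm_num : (2⁻¹:ℝ) < 1)
        exact ⟨n, by rw [mul_comm]; exact (le_div_iff₀ hρ).1 hn.le⟩
      classical
      set N := Nat.find hex with hN_def
      have hNle : ρ * 2⁻¹ ^ N ≤ dist x zc := Nat.find_spec hex
      have hNpos : N ≠ 0 := by
        intro h0
        rw [h0] at hNle
        simp at hNle
        linarith
      set i := N - 1 with hi_def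
      have hiN : i + 1 = N := Nat.succ_pred_eq_of_pos (Nat.pos_of_ne_zero hNpos)
      have hlt : dist x zc < ρ * 2⁻¹ ^ i := by
        by_contra hcon
        push_neg at hcon
        have := Nat.find_min hex (m := i) (by omega)
        exact this hcon
      have hmem : x ∈ ball zc (ρ * 2⁻¹ ^ i) := mem_ball.2 hlt
      have hle : (dist x zc)⁻¹ ≤ 2 ^ (i+1) / ρ := by
        rw [hiN]
        have h1 : ρ * 2⁻¹ ^ N > 0 := by positivity
        have := inv_anti₀ h1 hNle
        rw [mul_inv, inv_pow, inv_inv] at this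
        calc (dist x zc)⁻¹ ≤ ρ⁻¹ * 2 ^ N := this
          _ = 2 ^ N / ρ := by ring
      calc ENNReal.ofReal (dist x zc)⁻¹ ≤ ENNReal.ofReal (2 ^ (i+1) / ρ) :=
            ENNReal.ofReal_le_ofReal hle
        _ = g i x := by rw [hg_def]; simp only [indicator_of_mem hmem]
        _ ≤ ∑' j, g j x := ENNReal.le_tsum i
  calc ∫⁻ x in ball zc ρ, ENNReal.ofReal (dist x zc)⁻¹
      ≤ ∫⁻ x in ball zc ρ, ∑' i, g i x := by
        refine setLIntegral_mono (by exact Measurable.ennreal_tsum hgmeas) hpt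
    _ ≤ ∫⁻ x, ∑' i, g i x := setLIntegral_le_lintegral _ _
    _ = ∑' i, ∫⁻ x, g i x := lintegral_tsum fun i => (hgmeas i).aemeasurable
    _ ≤ ENNReal.ofReal (4 * Real.pi * ρ) := by
        have hgi : ∀ i, ∫⁻ x, g i x = ENNReal.ofReal (2 ^ (i+1) / ρ) *
            volume (ball zc (ρ * 2⁻¹ ^ i)) := by
          intro i
          rw [hg_def]
          simp only []
          rw [lintegral_indicator measurableSet_ball, setLIntegral_const]
        have hvol : ∀ i, volume (ball zc (ρ * 2⁻¹ ^ i)) =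
            ENNReal.ofReal ((ρ * 2⁻¹ ^ i) ^ 2 * Real.pi) := by
          intro i
          rw [Complex.volume_ball, ← ENNReal.ofReal_pow (by positivity)]
          rw [← ENNReal.ofReal_coe_nnreal]
          rw [← ENNReal.ofReal_mul (by positivity)]
          norm_num
        have hterm : ∀ i, ∫⁻ x, g i x =
            ENNReal.ofReal (2 * Real.pi * ρ) * ENNReal.ofReal (2⁻¹) ^ i := by
          intro i
          rw [hgi, hvol, ← ENNReal.ofReal_mul (by positivity), ← ENNReal.ofReal_pow (by norm_num),
            ← ENNReal.ofReal_mul (by positivity)]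
          congr 1
          have h2 : (2:ℝ) ^ (i+1) / ρ * ((ρ * 2⁻¹ ^ i) ^ 2 * Real.pi) =
              2 * Real.pi * ρ * (2⁻¹ ^ i) * (2 ^ i * 2⁻¹ ^ i) := by
            field_simp
            ring
          rw [h2, ← mul_pow]
          norm_num
        rw [tsum_congr hterm, ENNReal.tsum_mul_left, ENNReal.tsum_geometric]
        have : (1 - ENNReal.ofReal 2⁻¹)⁻¹ = 2 := by
          rw [ENNReal.ofReal_inv_of_pos (by norm_num), ENNReal.ofReal_ofNat]
          rw [ENNReal.one_sub_inv_two, inv_inv]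
        have h4 : ENNReal.ofReal (4 * Real.pi * ρ) = ENNReal.ofReal (2 * Real.pi * ρ) * 2 := by
          rw [show (4 * Real.pi * ρ : ℝ) = 2 * Real.pi * ρ * 2 by ring,
            ENNReal.ofReal_mul (by positivity)]
          norm_num
        rw [this, h4]

lemma lint_set_inv (E : Set ℂ) (hE : MeasurableSet E) (hfin : volume E ≠ ⊤) (zc : ℂ) :
    ∫⁻ x in E, ENNReal.ofReal (dist x zc)⁻¹ ≤
      ENNReal.ofReal ((4 * Real.pi + 1) * Real.sqrt (volume E).toReal) := by
  have hπ := Real.pi_pos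
  set m : ℝ := (volume E).toReal with hm_def
  have hm0 : 0 ≤ m := ENNReal.toReal_nonneg
  rcases eq_or_lt_of_le hm0 with hm | hm
  · have hE0 : volume E = 0 := by
      rw [← ENNReal.ofReal_toReal hfin, ← hm_def, ← hm]
      simp
    rw [setLIntegral_measure_zero _ _ hE0]
    exact zero_le
  · set ρ := Real.sqrt m with hρ_def
    have hρ : 0 < ρ := Real.sqrt_pos.2 hm
    have hsplit : ∫⁻ x in E, ENNReal.ofReal (dist x zc)⁻¹ ≤
        (∫⁻ x in E ∩ ball zc ρ, ENNReal.ofReal (dist x zc)⁻¹) +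
        ∫⁻ x in E \ ball zc ρ, ENNReal.ofReal (dist x zc)⁻¹ := by
      rw [← lintegral_inter_add_diff _ _ measurableSet_ball]
    have h1 : (∫⁻ x in E ∩ ball zc ρ, ENNReal.ofReal (dist x zc)⁻¹) ≤
        ENNReal.ofReal (4 * Real.pi * ρ) :=
      (lintegral_mono_set Set.inter_subset_right).trans (lint_ball_inv zc ρ hρ)
    have h2 : (∫⁻ x in E \ ball zc ρ, ENNReal.ofReal (dist x zc)⁻¹) ≤
        ENNReal.ofReal ρ := by
      have hb : ∀ x ∈ E \ ball zc ρ, ENNReal.ofReal (dist x zc)⁻¹ ≤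
          ENNReal.ofReal ρ⁻¹ := by
        intro x hx
        apply ENNReal.ofReal_le_ofReal
        have : ρ ≤ dist x zc := by
          have := hx.2
          rw [mem_ball] at this
          linarith [not_lt.1 this]
        exact inv_anti₀ hρ this
      calc ∫⁻ x in E \ ball zc ρ, ENNReal.ofReal (dist x zc)⁻¹
          ≤ ∫⁻ _x in E \ ball zc ρ, ENNReal.ofReal ρ⁻¹ :=
            setLIntegral_mono measurable_const hb
        _ = ENNReal.ofReal ρ⁻¹ * volume (E \ ball zc ρ) := setLIntegral_const _ _
        _ ≤ ENNReal.ofReal ρ⁻¹ * volume E :=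
            mul_le_mul_right (measure_mono diff_subset) _
        _ = ENNReal.ofReal ρ⁻¹ * ENNReal.ofReal m := by
            rw [hm_def, ENNReal.ofReal_toReal hfin]
        _ = ENNReal.ofReal (ρ⁻¹ * m) := (ENNReal.ofReal_mul (by positivity)).symm
        _ = ENNReal.ofReal ρ := by
            congr 1
            rw [hρ_def]
            have hne : Real.sqrt m ≠ 0 := (Real.sqrt_pos.2 hm).ne'
            field_simp
            exact (Real.sq_sqrt hm0).symm
    calc ∫⁻ x in E, ENNReal.ofReal (dist x zc)⁻¹
        ≤ ENNReal.ofReal (4 * Real.pi * ρ) + ENNReal.ofReal ρ :=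
          hsplit.trans (add_le_add h1 h2)
      _ = ENNReal.ofReal ((4 * Real.pi + 1) * ρ) := by
          rw [← ENNReal.ofReal_add (by positivity) hρ.le]
          congr 1
          ring

lemma weak_bound {Λ : ℕ} (z : Fin Λ → ℂ) (t : ℝ) (ht : 0 < t) :
    volume {x : ℂ | x ∈ ball (0:ℂ) (1/2) ∧ t < ∑ j, (dist x (z j))⁻¹} ≤
      ENNReal.ofReal (((4 * Real.pi + 1) * Λ / t) ^ 2) := by
  have hπ := Real.pi_pos
  set S : ℂ → ℝ := fun x => ∑ j, (dist x (z j))⁻¹ with hS_def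
  have hSmeas : Measurable S := by
    apply Finset.measurable_sum
    intro j _
    exact (measurable_id.dist measurable_const).inv
  set E : Set ℂ := {x : ℂ | x ∈ ball (0:ℂ) (1/2) ∧ t < S x} with hE_def
  have hEmeas : MeasurableSet E := by
    rw [hE_def]
    exact measurableSet_ball.inter (hSmeas measurableSet_Ioi)
  have hEsub : E ⊆ ball (0:ℂ) (1/2) := fun x hx => hx.1
  have hfin : volume E ≠ ⊤ := by
    refine (lt_of_le_of_lt (measure_mono hEsub) ?_).ne
    rw [Complex.volume_ball]
    exact ENNReal.mul_lt_top (ENNReal.pow_lt_top ENNReal.ofReal_lt_top) ENNReal.coe_lt_top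
  set m : ℝ := (volume E).toReal with hm_def
  have hm0 : 0 ≤ m := ENNReal.toReal_nonneg
  -- Chebyshev
  have cheb : ENNReal.ofReal t * volume E ≤ ∫⁻ x in E, ENNReal.ofReal (S x) := by
    have : ∀ x ∈ E, ENNReal.ofReal t ≤ ENNReal.ofReal (S x) := fun x hx =>
      ENNReal.ofReal_le_ofReal (le_of_lt hx.2)
    calc ENNReal.ofReal t * volume E = ∫⁻ _x in E, ENNReal.ofReal t :=
          (setLIntegral_const _ _).symm
      _ ≤ ∫⁻ x in E, ENNReal.ofReal (S x) :=
          setLIntegral_mono (ENNReal.measurable_ofReal.comp hSmeas) this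
  have sum_split : ∫⁻ x in E, ENNReal.ofReal (S x) ≤
      ∑ j, ∫⁻ x in E, ENNReal.ofReal (dist x (z j))⁻¹ := by
    have hpt : ∀ x, ENNReal.ofReal (S x) = ∑ j, ENNReal.ofReal (dist x (z j))⁻¹ := by
      intro x
      rw [hS_def]
      exact ENNReal.ofReal_sum_of_nonneg fun j _ => by positivity
    rw [lintegral_congr hpt]
    rw [lintegral_finset_sum]
    intro j _
    exact (ENNReal.measurable_ofReal.comp ((measurable_id.dist measurable_const).inv))
  have each_le : ∀ j : Fin Λ, ∫⁻ x in E, ENNReal.ofReal (dist x (z j))⁻¹ ≤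
      ENNReal.ofReal ((4 * Real.pi + 1) * Real.sqrt m) := fun j =>
    lint_set_inv E hEmeas hfin (z j)
  have total : ENNReal.ofReal (t * m) ≤
      ENNReal.ofReal ((Λ : ℝ) * ((4 * Real.pi + 1) * Real.sqrt m)) := by
    have c1 : ENNReal.ofReal t * volume E ≤ ∑ _j : Fin Λ,
        ENNReal.ofReal ((4 * Real.pi + 1) * Real.sqrt m) :=
      (cheb.trans sum_split).trans (Finset.sum_le_sum fun j _ => each_le j)
    have c2 : (∑ _j : Fin Λ, ENNReal.ofReal ((4 * Real.pi + 1) * Real.sqrt m)) =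
        ENNReal.ofReal ((Λ : ℝ) * ((4 * Real.pi + 1) * Real.sqrt m)) := by
      rw [Finset.sum_const, Finset.card_univ, Fintype.card_fin, nsmul_eq_mul,
        ← ENNReal.ofReal_natCast Λ, ← ENNReal.ofReal_mul (by positivity)]
    have c3 : ENNReal.ofReal (t * m) = ENNReal.ofReal t * volume E := by
      rw [ENNReal.ofReal_mul ht.le, hm_def, ENNReal.ofReal_toReal hfin]
    rw [c3]
    exact c1.trans (le_of_eq c2)
  have treal : t * m ≤ (Λ : ℝ) * ((4 * Real.pi + 1) * Real.sqrt m) :=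
    (ENNReal.ofReal_le_ofReal_iff (by positivity)).1 total
  have hmle : m ≤ ((4 * Real.pi + 1) * Λ / t) ^ 2 := by
    rcases eq_or_lt_of_le hm0 with hm | hm
    · rw [← hm]; positivity
    · have hsq : 0 < Real.sqrt m := Real.sqrt_pos.2 hm
      have hmm : m = Real.sqrt m * Real.sqrt m := (Real.mul_self_sqrt hm0).symm
      have step : t * Real.sqrt m ≤ (Λ : ℝ) * (4 * Real.pi + 1) := by
        have : t * (Real.sqrt m * Real.sqrt m) ≤ ((Λ : ℝ) * (4 * Real.pi + 1)) * Real.sqrt m := by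
          calc t * (Real.sqrt m * Real.sqrt m) = t * m := by rw [← hmm]
            _ ≤ (Λ : ℝ) * ((4 * Real.pi + 1) * Real.sqrt m) := treal
            _ = ((Λ : ℝ) * (4 * Real.pi + 1)) * Real.sqrt m := by ring
        have h' := mul_le_mul_of_nonneg_right (le_refl (1:ℝ)) hm0
        nlinarith [hsq]
      have step2 : Real.sqrt m ≤ (4 * Real.pi + 1) * Λ / t := by
        rw [le_div_iff₀ ht]
        nlinarith
      calc m = Real.sqrt m * Real.sqrt m := hmm
        _ ≤ ((4 * Real.pi + 1) * Λ / t) * ((4 * Real.pi + 1) * Λ / t) :=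
            mul_le_mul step2 step2 hsq.le (by positivity)
        _ = ((4 * Real.pi + 1) * Λ / t) ^ 2 := by ring
  calc volume E = ENNReal.ofReal m := by rw [hm_def, ENNReal.ofReal_toReal hfin]
    _ ≤ ENNReal.ofReal (((4 * Real.pi + 1) * Λ / t) ^ 2) := ENNReal.ofReal_le_ofReal hmle

/-- Proposition 4.1: for a monic polynomial `P` of degree `Λ` with roots
`z₁,…,z_Λ`, the superlevel set `{N_P(·,r) > 1/2}` in the half disk has measure
at most `CΛ²r²`. -/
theorem poly_freq_superlevel_volume :
    ∃ C > (0 : ℝ), ∀ (Λ : ℕ), 1 ≤ Λ → ∀ (z : Fin Λ → ℂ) (r : ℝ), 0 < r →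
      volume {x : ℂ | x ∈ ball (0 : ℂ) (1 / 2) ∧
          freq (fun w => ∏ j, (w - z j)) x r > 1 / 2} ≤
        ENNReal.ofReal (C * (Λ : ℝ) ^ 2 * r ^ 2) := by
  have hπ := Real.pi_pos
  have hπ' := Real.pi_lt_d2
  refine ⟨12000, by norm_num, ?_⟩
  intro Λ hΛ z r hr
  set t : ℝ := 1 / (8 * r) with ht_def
  have ht : 0 < t := by positivity
  set E : Set ℂ := {x : ℂ | x ∈ ball (0:ℂ) (1/2) ∧ t < ∑ j, (dist x (z j))⁻¹} with hE_def
  have hsub : {x : ℂ | x ∈ ball (0 : ℂ) (1 / 2) ∧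
      freq (fun w => ∏ j, (w - z j)) x r > 1 / 2} ⊆ Set.range z ∪ E := by
    intro x hx
    obtain ⟨hxball, hxfreq⟩ := hx
    by_cases hroot : ∃ j, x = z j
    · obtain ⟨j, hj⟩ := hroot
      exact Or.inl ⟨j, hj.symm⟩
    · push_neg at hroot
      right
      refine ⟨hxball, ?_⟩
      by_contra hcon
      push_neg at hcon
      exact absurd hxfreq (not_lt.2 (freq_le_of_S_small z x r hr hroot (hcon.trans (le_of_eq ht_def))))
  calc volume {x : ℂ | x ∈ ball (0 : ℂ) (1 / 2) ∧
        freq (fun w => ∏ j, (w - z j)) x r > 1 / 2}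
      ≤ volume (Set.range z ∪ E) := measure_mono hsub
    _ ≤ volume (Set.range z) + volume E := measure_union_le _ _
    _ = volume E := by
        rw [(Set.finite_range z).measure_zero volume, zero_add]
    _ ≤ ENNReal.ofReal (((4 * Real.pi + 1) * Λ / t) ^ 2) := weak_bound z t ht
    _ ≤ ENNReal.ofReal (12000 * (Λ : ℝ) ^ 2 * r ^ 2) := by
        apply ENNReal.ofReal_le_ofReal
        have hteq : (4 * Real.pi + 1) * Λ / t = (4 * Real.pi + 1) * Λ * (8 * r) := by
          rw [ht_def]
          field_simp
        rw [hteq]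
        have hΛ0 : (0:ℝ) ≤ (Λ:ℝ) := Nat.cast_nonneg Λ
        have hsq : ((4 * Real.pi + 1) * Λ * (8 * r)) ^ 2 =
            64 * (4 * Real.pi + 1) ^ 2 * (Λ:ℝ) ^ 2 * r ^ 2 := by ring
        rw [hsq]
        have hc : 64 * (4 * Real.pi + 1) ^ 2 ≤ 12000 := by nlinarith
        nlinarith [sq_nonneg ((Λ:ℝ) * r), mul_pos (mul_pos (by norm_num : (0:ℝ) < 64) hr) hr]
end

section
/- There exists a universal constant C > 0 with the following property. For every natural number Λ ≥ 1, every choice of points z₁, …, z_Λ ∈ ℂ, and every r > 0, letting P(z) = ∏_{j=1}^{Λ} (z − z_j), the planar Lebesgue measure of the set { z₀ ∈ B(0,1/2) : sup_{w ∈ B(z₀,2r)} |P(w)|² > 2^{1/2} · inf_{z ∈ B(z₀,r)} |P(z)|² } is at most C·Λ²·r². -/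
open MeasureTheory Metric Finset
open scoped ENNReal NNReal


lemma key {Λ : ℕ} (z : Fin Λ → ℂ) {r : ℝ} (hr : 0 < r) (z₀ : ℂ)
    (hd : ∀ j, 3 * r ≤ ‖z₀ - z j‖)
    (hsum : ∑ j, 1 / ‖z₀ - z j‖ ≤ 1 / (60 * r)) :
    sSup ((fun w => ‖∏ j, (w - z j)‖ ^ 2) '' ball z₀ (2 * r)) ≤
      (2 : ℝ) ^ ((1 : ℝ) / 2) *
        sInf ((fun w => ‖∏ j, (w - z j)‖ ^ 2) '' ball z₀ r) := by
  set d : Fin Λ → ℝ := fun j => ‖z₀ - z j‖ with hdd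
  have hdpos : ∀ j, 0 < d j := fun j => lt_of_lt_of_le (by linarith) (hd j)
  set A : ℝ := ∏ j, (d j + 2 * r) with hA
  set B : ℝ := ∏ j, (d j - r) with hB
  have hBpos : 0 < B := Finset.prod_pos (fun j _ => by have := hd j; linarith)
  have hApos : 0 < A := Finset.prod_pos (fun j _ => by have := hdpos j; linarith)
  -- upper bound for values on the big ball
  have hsup : ∀ w ∈ ball z₀ (2 * r), ‖∏ j, (w - z j)‖ ^ 2 ≤ A ^ 2 := by
    intro w hw
    have h1 : ‖∏ j, (w - z j)‖ = ∏ j, ‖w - z j‖ := by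
      exact norm_prod _ _
    have h2 : ∏ j, ‖w - z j‖ ≤ A := by
      apply Finset.prod_le_prod (fun j _ => norm_nonneg _)
      intro j _
      have h3 : ‖w - z₀‖ < 2 * r := by
        rw [← Complex.dist_eq]; exact mem_ball.mp hw
      calc ‖w - z j‖ = ‖(w - z₀) + (z₀ - z j)‖ := by ring_nf
        _ ≤ ‖w - z₀‖ + ‖z₀ - z j‖ := norm_add_le _ _
        _ ≤ d j + 2 * r := by rw [hdd]; linarith
    rw [h1]
    exact pow_le_pow_left₀ (Finset.prod_nonneg fun j _ => norm_nonneg _) h2 2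
  have hinf : ∀ w ∈ ball z₀ r, B ^ 2 ≤ ‖∏ j, (w - z j)‖ ^ 2 := by
    intro w hw
    have h1 : ‖∏ j, (w - z j)‖ = ∏ j, ‖w - z j‖ :=
      norm_prod _ _
    have h2 : B ≤ ∏ j, ‖w - z j‖ := by
      apply Finset.prod_le_prod (fun j _ => by have := hd j; linarith)
      intro j _
      have h3 : ‖w - z₀‖ < r := by
        rw [← Complex.dist_eq]; exact mem_ball.mp hw
      have h4 : d j ≤ ‖w - z₀‖ + ‖w - z j‖ := by
        calc d j = ‖(z₀ - w) + (w - z j)‖ := by rw [hdd]; ring_nf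
          _ ≤ ‖z₀ - w‖ + ‖w - z j‖ := norm_add_le _ _
          _ = _ := by rw [norm_sub_rev]
      linarith
    rw [h1]
    exact pow_le_pow_left₀ (by positivity) h2 2
  have hAB : A ≤ Real.exp (Real.log 2 / 8) * B := by
    have h1 : A ≤ ∏ j, (Real.exp (9 / 2 * (r / d j)) * (d j - r)) := by
      apply Finset.prod_le_prod (fun j _ => by have := hdpos j; positivity)
      intro j _
      have hx : 9 / 2 * (r / d j) + 1 ≤ Real.exp (9 / 2 * (r / d j)) :=
        Real.add_one_le_exp _
      have hdj := hd j; have hdp := hdpos j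
      have hqd : r / d j * d j = r := div_mul_cancel₀ _ hdp.ne'
      have hq3 : r / d j ≤ 1 / 3 := by
        rw [div_le_div_iff₀ hdp (by norm_num)]; linarith
      have hq0 : 0 ≤ r / d j := by positivity
      nlinarith [mul_le_mul_of_nonneg_right hq3 hr.le,
        mul_le_mul_of_nonneg_right hx (by linarith : (0:ℝ) ≤ d j - r)]
    calc A ≤ _ := h1
      _ = Real.exp (∑ j, 9 / 2 * (r / d j)) * B := by
          rw [Finset.prod_mul_distrib, Real.exp_sum]
      _ ≤ Real.exp (Real.log 2 / 8) * B := by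
          apply mul_le_mul_of_nonneg_right _ hBpos.le
          apply Real.exp_le_exp.mpr
          have e1 : ∑ j, 9 / 2 * (r / d j) = 9 / 2 * r * ∑ j, 1 / d j := by
            rw [Finset.mul_sum]; exact Finset.sum_congr rfl fun j _ => by ring
          have e2 : 9 / 2 * r * ∑ j, 1 / d j ≤ 9 / 2 * r * (1 / (60 * r)) :=
            mul_le_mul_of_nonneg_left hsum (by positivity)
          have e3 : 9 / 2 * r * (1 / (60 * r)) = 3 / 40 := by
            field_simp; ring
          have e4 : (3 : ℝ) / 40 ≤ Real.log 2 / 8 := by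
            have := Real.log_two_gt_d9; linarith
          rw [e1]; linarith
  have hA2 : A ^ 2 ≤ Real.exp (Real.log 2 / 4) * B ^ 2 := by
    have h1 : A ^ 2 ≤ (Real.exp (Real.log 2 / 8) * B) ^ 2 :=
      pow_le_pow_left₀ hApos.le hAB 2
    have h2 : (Real.exp (Real.log 2 / 8) * B) ^ 2
        = Real.exp (Real.log 2 / 4) * B ^ 2 := by
      rw [mul_pow, ← Real.exp_nat_mul]
      congr 2
      push_cast; ring
    linarith [h1, h2.le, h2.ge]
  have hhalf : Real.exp (Real.log 2 / 4) ≤ (2 : ℝ) ^ ((1 : ℝ) / 2) := by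
    rw [Real.rpow_def_of_pos (by norm_num : (0:ℝ) < 2)]
    apply Real.exp_le_exp.mpr
    have := Real.log_two_gt_d9; linarith
  have hne2 : ((fun w => ‖∏ j, (w - z j)‖ ^ 2) '' ball z₀ (2 * r)).Nonempty :=
    Set.Nonempty.image _ (nonempty_ball.mpr (by linarith))
  have hne1 : ((fun w => ‖∏ j, (w - z j)‖ ^ 2) '' ball z₀ r).Nonempty :=
    Set.Nonempty.image _ (nonempty_ball.mpr hr)
  have hS : sSup ((fun w => ‖∏ j, (w - z j)‖ ^ 2) '' ball z₀ (2 * r)) ≤ A ^ 2 := by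
    apply csSup_le hne2
    rintro y ⟨w, hw, rfl⟩
    exact hsup w hw
  have hI : B ^ 2 ≤ sInf ((fun w => ‖∏ j, (w - z j)‖ ^ 2) '' ball z₀ r) := by
    apply le_csInf hne1
    rintro y ⟨w, hw, rfl⟩
    exact hinf w hw
  have hrpow : (0:ℝ) ≤ (2 : ℝ) ^ ((1 : ℝ) / 2) := Real.rpow_nonneg (by norm_num) _
  calc sSup _ ≤ A ^ 2 := hS
    _ ≤ Real.exp (Real.log 2 / 4) * B ^ 2 := hA2
    _ ≤ (2 : ℝ) ^ ((1 : ℝ) / 2) * B ^ 2 := mul_le_mul_of_nonneg_right hhalf (sq_nonneg B)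
    _ ≤ _ := mul_le_mul_of_nonneg_left hI hrpow


lemma kernel_int (w₀ : ℂ) {δ : ℝ} (hδ : 0 < δ) :
    ∫⁻ w, (closedBall w₀ δ).indicator
        (fun w => ENNReal.ofReal (1 / ‖w - w₀‖)) w ≤
      ENNReal.ofReal (4 * δ) * NNReal.pi := by
  set f : ℂ → ℝ≥0∞ := fun w =>
    (closedBall w₀ δ).indicator (fun w => ENNReal.ofReal (1 / ‖w - w₀‖)) w
  set F : ℕ → ℂ → ℝ≥0∞ := fun i w =>
    (closedBall w₀ (δ / 2 ^ i)).indicator (fun _ => ENNReal.ofReal (2 ^ (i + 1) / δ)) w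
  have hptwise : ∀ w, f w ≤ ∑' i, F i w := by
    intro w
    by_cases hw : w ∈ closedBall w₀ δ
    · set t : ℝ := ‖w - w₀‖ with ht
      have ht0 : 0 ≤ t := norm_nonneg _
      have htδ : t ≤ δ := by rw [ht, ← Complex.dist_eq]; exact mem_closedBall.mp hw
      rcases eq_or_lt_of_le ht0 with h0 | h0
      · have : f w = 0 := by
          simp only [f, Set.indicator_of_mem hw, ← ht, ← h0]
          norm_num
        rw [this]; exact zero_le
      · -- find i with t * 2 ^ i ≤ δ < t * 2 ^ (i + 1)
        have hex : ∃ n, δ < t * 2 ^ n := by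
          obtain ⟨n, hn⟩ := pow_unbounded_of_one_lt (δ / t) (one_lt_two (α := ℝ))
          exact ⟨n, by rw [div_lt_iff₀ h0] at hn; linarith [hn]⟩
        classical
        set n := Nat.find hex with hn
        have hn1 : δ < t * 2 ^ n := Nat.find_spec hex
        have hnpos : n ≠ 0 := by
          intro h
          rw [h] at hn1; simp at hn1; linarith
        set i := n - 1 with hi
        have hni : n = i + 1 := (Nat.succ_pred_eq_of_pos (Nat.pos_of_ne_zero hnpos)).symm
        have hile : t * 2 ^ i ≤ δ := by
          by_contra hcon
          push_neg at hcon
          exact Nat.find_min hex (by omega : i < n) hcon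
        have hmem : w ∈ closedBall w₀ (δ / 2 ^ i) := by
          rw [mem_closedBall, Complex.dist_eq, ← ht, le_div_iff₀ (by positivity)]
          exact hile
        have hval : ENNReal.ofReal (1 / t) ≤ ENNReal.ofReal (2 ^ (i + 1) / δ) := by
          apply ENNReal.ofReal_le_ofReal
          rw [div_le_div_iff₀ h0 hδ]
          rw [hni] at hn1; linarith
        calc f w = ENNReal.ofReal (1 / t) := by
              simp only [f, Set.indicator_of_mem hw]; rfl
          _ ≤ F i w := by rw [show F i w = ENNReal.ofReal (2 ^ (i + 1) / δ) from
                Set.indicator_of_mem hmem _]; exact hval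
          _ ≤ ∑' i, F i w := ENNReal.le_tsum i
    · have : f w = 0 := Set.indicator_of_notMem hw _
      rw [this]; exact zero_le
  calc ∫⁻ w, f w ≤ ∫⁻ w, ∑' i, F i w := lintegral_mono hptwise
    _ = ∑' i, ∫⁻ w, F i w := by
        rw [lintegral_tsum]
        intro i
        exact ((measurable_const (a := ENNReal.ofReal (2 ^ (i + 1) / δ))).indicator
          measurableSet_closedBall).aemeasurable
    _ = ∑' i, ENNReal.ofReal (2 ^ (i + 1) / δ) * volume (closedBall w₀ (δ / 2 ^ i)) := by
        congr 1; ext i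
        rw [lintegral_indicator_const measurableSet_closedBall]
    _ = ∑' (i : ℕ), ENNReal.ofReal (2 * δ) * 2⁻¹ ^ i * NNReal.pi := by
        congr 1; ext i
        rw [Complex.volume_closedBall, ← ENNReal.ofReal_pow (by positivity),
          ← mul_assoc, ← ENNReal.ofReal_mul (by positivity)]
        congr 1
        have h1 : (2⁻¹ : ℝ≥0∞) ^ i = ENNReal.ofReal ((2⁻¹ : ℝ) ^ i) := by
          rw [ENNReal.ofReal_pow (by norm_num)]
          congr 1
          rw [ENNReal.ofReal_inv_of_pos (by norm_num : (0:ℝ) < 2)]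
          norm_num
        rw [h1, ← ENNReal.ofReal_mul (by positivity)]
        congr 1
        field_simp
        rw [one_div, inv_pow, pow_succ, sq]
        have h2 : (2:ℝ) ^ i ≠ 0 := by positivity
        linear_combination (-(2:ℝ) ^ i * 2) * mul_inv_cancel₀ h2
    _ = ENNReal.ofReal (2 * δ) * (1 - 2⁻¹)⁻¹ * NNReal.pi := by
        rw [ENNReal.tsum_mul_right, ENNReal.tsum_mul_left, ENNReal.tsum_geometric]
    _ = ENNReal.ofReal (4 * δ) * NNReal.pi := by
        congr 1
        rw [ENNReal.one_sub_inv_two, inv_inv,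
          show (2 : ℝ≥0∞) = ENNReal.ofReal 2 by norm_num,
          ← ENNReal.ofReal_mul (by positivity)]
        congr 1
        ring

/-- Corollary 4.2: the `L^∞`-based doubling quantity of a monic polynomial of
degree `Λ` exceeds `2^{1/2}` (i.e. its `log₂` exceeds `1/2`) only on a subset of
the half disk of measure at most `CΛ²r²`. -/
theorem poly_sup_inf_superlevel_volume :
    ∃ C > (0 : ℝ), ∀ (Λ : ℕ), 1 ≤ Λ → ∀ (z : Fin Λ → ℂ) (r : ℝ), 0 < r →
      volume {z₀ : ℂ | z₀ ∈ ball (0 : ℂ) (1 / 2) ∧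
          sSup ((fun w => ‖∏ j, (w - z j)‖ ^ 2) '' ball z₀ (2 * r)) >
            (2 : ℝ) ^ ((1 : ℝ) / 2) *
              sInf ((fun w => ‖∏ j, (w - z j)‖ ^ 2) '' ball z₀ r)} ≤
        ENNReal.ofReal (C * (Λ : ℝ) ^ 2 * r ^ 2) := by
  classical
  refine ⟨1000000, by norm_num, ?_⟩
  intro Λ hΛ z r hr
  have hΛR : (1 : ℝ) ≤ (Λ : ℝ) := by exact_mod_cast hΛ
  have hΛ0 : (0 : ℝ) < (Λ : ℝ) := by linarith
  set δ : ℝ := 120 * Λ * r with hδdef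
  have hδpos : 0 < δ := by positivity
  set g : ℂ → ℝ≥0∞ := fun w => ∑ j, (closedBall (z j) δ).indicator
      (fun w => ENNReal.ofReal (1 / ‖w - z j‖)) w with hg
  have hmeasj : ∀ j : Fin Λ,
      Measurable ((closedBall (z j) δ).indicator
        (fun w => ENNReal.ofReal (1 / ‖w - z j‖))) := by
    intro j
    apply Measurable.indicator _ measurableSet_closedBall
    apply ENNReal.measurable_ofReal.comp
    exact measurable_const.div
      (continuous_norm.comp (continuous_id.sub continuous_const)).measurable
  have hgmeas : Measurable g := Finset.measurable_sum _ (fun j _ => hmeasj j)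
  -- the inclusion
  have hsub : {z₀ : ℂ | z₀ ∈ ball (0 : ℂ) (1 / 2) ∧
          sSup ((fun w => ‖∏ j, (w - z j)‖ ^ 2) '' ball z₀ (2 * r)) >
            (2 : ℝ) ^ ((1 : ℝ) / 2) *
              sInf ((fun w => ‖∏ j, (w - z j)‖ ^ 2) '' ball z₀ r)} ⊆
      (⋃ j, closedBall (z j) (3 * r)) ∪ {w | ENNReal.ofReal (1 / (120 * r)) ≤ g w} := by
    intro z₀ hz₀
    rw [Set.mem_union]
    by_contra hcon
    push_neg at hcon
    obtain ⟨h1, h2⟩ := hcon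
    have hd : ∀ j, 3 * r ≤ ‖z₀ - z j‖ := by
      intro j
      have hj : z₀ ∉ closedBall (z j) (3 * r) := fun h => h1 (Set.mem_iUnion.mpr ⟨j, h⟩)
      rw [mem_closedBall, Complex.dist_eq] at hj
      push_neg at hj
      linarith
    have hsum : ∑ j, 1 / ‖z₀ - z j‖ ≤ 1 / (60 * r) := by
      by_contra hs
      push_neg at hs
      apply h2
      show ENNReal.ofReal (1 / (120 * r)) ≤ g z₀
      set T : Finset (Fin Λ) := Finset.univ.filter (fun j => ‖z₀ - z j‖ ≤ δ) with hT
      have hgval : g z₀ = ENNReal.ofReal (∑ j ∈ T, 1 / ‖z₀ - z j‖) := by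
        rw [hg]
        rw [ENNReal.ofReal_sum_of_nonneg (fun j _ => by positivity)]
        rw [hT, Finset.sum_filter]
        apply Finset.sum_congr rfl
        intro j _
        rw [Set.indicator_apply]
        by_cases hmem : z₀ ∈ closedBall (z j) δ
        · rw [if_pos hmem, if_pos (by rwa [mem_closedBall, Complex.dist_eq] at hmem)]
        · rw [if_neg hmem, if_neg (by rwa [mem_closedBall, Complex.dist_eq] at hmem)]
      rw [hgval]
      apply ENNReal.ofReal_le_ofReal
      -- tail estimate
      have htail : ∑ j ∈ Finset.univ.filter (fun j => ¬ ‖z₀ - z j‖ ≤ δ),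
          1 / ‖z₀ - z j‖ ≤ 1 / (120 * r) := by
        have hcard : ((Finset.univ.filter (fun j => ¬ ‖z₀ - z j‖ ≤ δ)).card : ℝ)
            ≤ (Λ : ℝ) := by
          exact_mod_cast (Finset.card_filter_le _ _).trans_eq (Finset.card_univ.trans
            (Fintype.card_fin Λ))
        calc ∑ j ∈ Finset.univ.filter (fun j => ¬ ‖z₀ - z j‖ ≤ δ),
              1 / ‖z₀ - z j‖
            ≤ ∑ j ∈ Finset.univ.filter (fun j => ¬ ‖z₀ - z j‖ ≤ δ), 1 / δ := by
              apply Finset.sum_le_sum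
              intro j hj
              rw [Finset.mem_filter] at hj
              push_neg at hj
              exact one_div_le_one_div_of_le hδpos hj.2.le
          _ = ((Finset.univ.filter (fun j => ¬ ‖z₀ - z j‖ ≤ δ)).card : ℝ) * (1 / δ) := by
              rw [Finset.sum_const, nsmul_eq_mul]
          _ ≤ (Λ : ℝ) * (1 / δ) := by
              apply mul_le_mul_of_nonneg_right hcard (by positivity)
          _ = 1 / (120 * r) := by
              rw [hδdef]; field_simp
      have hsplit : ∑ j ∈ T, 1 / ‖z₀ - z j‖
          + ∑ j ∈ Finset.univ.filter (fun j => ¬ ‖z₀ - z j‖ ≤ δ),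
              1 / ‖z₀ - z j‖
          = ∑ j, 1 / ‖z₀ - z j‖ := by
        rw [hT]; exact Finset.sum_filter_add_sum_filter_not _ _ _
      have h60 : 1 / (60 * r) - 1 / (120 * r) = 1 / (120 * r) := by
        field_simp; ring
      linarith
    exact absurd hz₀.2 (not_lt.mpr (key z hr z₀ hd hsum))
  -- volume bounds
  have hb1 : volume (⋃ j, closedBall (z j) (3 * r)) ≤
      ENNReal.ofReal (36 * Λ * r ^ 2) := by
    calc volume (⋃ j, closedBall (z j) (3 * r)) ≤ ∑' j : Fin Λ, volume (closedBall (z j) (3 * r)) :=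
          measure_iUnion_le _
      _ = ∑ j : Fin Λ, volume (closedBall (z j) (3 * r)) := tsum_fintype _
      _ = (Λ : ℝ≥0∞) * (ENNReal.ofReal (3 * r) ^ 2 * NNReal.pi) := by
          simp [Finset.sum_const, Complex.volume_closedBall, nsmul_eq_mul]
      _ ≤ ENNReal.ofReal (Λ : ℝ) * (ENNReal.ofReal ((3 * r) ^ 2) * ENNReal.ofReal 4) := by
          rw [ENNReal.ofReal_natCast, ← ENNReal.ofReal_pow (by positivity)]
          apply mul_le_mul_right (mul_le_mul_right _ _)
          calc (NNReal.pi : ℝ≥0∞) = ENNReal.ofReal Real.pi := by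
                rw [← NNReal.coe_real_pi, ENNReal.ofReal_coe_nnreal]
            _ ≤ ENNReal.ofReal 4 := ENNReal.ofReal_le_ofReal Real.pi_le_four
      _ = ENNReal.ofReal (36 * Λ * r ^ 2) := by
          rw [← ENNReal.ofReal_mul (by positivity), ← ENNReal.ofReal_mul (by positivity)]
          congr 1
          ring
  have hb2 : volume {w : ℂ | ENNReal.ofReal (1 / (120 * r)) ≤ g w} ≤
      ENNReal.ofReal (230400 * Λ ^ 2 * r ^ 2) := by
    have hmarkov := meas_ge_le_lintegral_div (μ := volume) hgmeas.aemeasurable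
      (ε := ENNReal.ofReal (1 / (120 * r)))
      (ne_of_gt (ENNReal.ofReal_pos.mpr (by positivity))) ENNReal.ofReal_ne_top
    have hint : ∫⁻ w, g w ≤ (Λ : ℝ≥0∞) * (ENNReal.ofReal (4 * δ) * NNReal.pi) := by
      calc ∫⁻ w, g w = ∑ j, ∫⁻ w, (closedBall (z j) δ).indicator
            (fun w => ENNReal.ofReal (1 / ‖w - z j‖)) w := by
            rw [hg]; exact lintegral_finset_sum _ (fun j _ => hmeasj j)
        _ ≤ ∑ j : Fin Λ, (ENNReal.ofReal (4 * δ) * NNReal.pi) := by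
            exact Finset.sum_le_sum (fun j _ => kernel_int (z j) hδpos)
        _ = (Λ : ℝ≥0∞) * (ENNReal.ofReal (4 * δ) * NNReal.pi) := by
            simp [Finset.sum_const, nsmul_eq_mul]
    have hinv : (ENNReal.ofReal (1 / (120 * r)))⁻¹ = ENNReal.ofReal (120 * r) := by
      rw [one_div, ENNReal.ofReal_inv_of_pos (by positivity), inv_inv]
    calc volume {w : ℂ | ENNReal.ofReal (1 / (120 * r)) ≤ g w}
        ≤ (∫⁻ w, g w) / ENNReal.ofReal (1 / (120 * r)) := hmarkov
      _ ≤ ((Λ : ℝ≥0∞) * (ENNReal.ofReal (4 * δ) * NNReal.pi)) / ENNReal.ofReal (1 / (120 * r)) := by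
          exact ENNReal.div_le_div_right hint _
      _ = (Λ : ℝ≥0∞) * (ENNReal.ofReal (4 * δ) * NNReal.pi) * ENNReal.ofReal (120 * r) := by
          rw [ENNReal.div_eq_inv_mul, hinv]; ring
      _ ≤ ENNReal.ofReal (Λ : ℝ) * (ENNReal.ofReal (4 * δ) * ENNReal.ofReal 4) *
            ENNReal.ofReal (120 * r) := by
          rw [ENNReal.ofReal_natCast]
          apply mul_le_mul_left (mul_le_mul_right (mul_le_mul_right _ _) _)
          calc (NNReal.pi : ℝ≥0∞) = ENNReal.ofReal Real.pi := by
                rw [← NNReal.coe_real_pi, ENNReal.ofReal_coe_nnreal]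
            _ ≤ ENNReal.ofReal 4 := ENNReal.ofReal_le_ofReal Real.pi_le_four
      _ = ENNReal.ofReal (230400 * Λ ^ 2 * r ^ 2) := by
          rw [← ENNReal.ofReal_mul (by positivity), ← ENNReal.ofReal_mul (by positivity),
            ← ENNReal.ofReal_mul (by positivity)]
          congr 1
          rw [hδdef]
          ring
  calc volume _ ≤ volume ((⋃ j, closedBall (z j) (3 * r)) ∪
        {w : ℂ | ENNReal.ofReal (1 / (120 * r)) ≤ g w}) := measure_mono hsub
    _ ≤ volume (⋃ j, closedBall (z j) (3 * r)) +
        volume {w : ℂ | ENNReal.ofReal (1 / (120 * r)) ≤ g w} := measure_union_le _ _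
    _ ≤ ENNReal.ofReal (36 * Λ * r ^ 2) + ENNReal.ofReal (230400 * Λ ^ 2 * r ^ 2) :=
        add_le_add hb1 hb2
    _ ≤ ENNReal.ofReal (1000000 * (Λ : ℝ) ^ 2 * r ^ 2) := by
        rw [← ENNReal.ofReal_add (by positivity) (by positivity)]
        apply ENNReal.ofReal_le_ofReal
        nlinarith [mul_nonneg (mul_nonneg (sub_nonneg.mpr hΛR) hΛ0.le) (sq_nonneg r)]
end

section
/- There exists a universal constant C > 0 with the following property. Let Λ ≥ 1 be a natural number, z₁, …, z_Λ ∈ ℂ, P(z) = ∏_{j=1}^{Λ}(z − z_j), let r > 0, and let z₀ ∈ ℂ satisfy |z₀ − z_j| ≥ 4r for every j. Then log₂( sup_{w ∈ B(z₀,2r)} |P(w)|² / inf_{z ∈ B(z₀,r)} |P(z)|² ) ≤ C · ∑_{j=1}^{Λ} r / |z₀ − z_j|. -/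
open MeasureTheory Metric

/-- The pointwise estimate from the proof of Proposition 4.1: if `z₀` is at
distance at least `4r` from every root of the monic polynomial `P`, then the
`L^∞`-based doubling quantity of `P` at `z₀` is bounded by `C ∑ⱼ r/|z₀ − zⱼ|`. -/
theorem poly_doubling_pointwise_bound :
    ∃ C > (0 : ℝ), ∀ (Λ : ℕ), 1 ≤ Λ → ∀ (z : Fin Λ → ℂ) (r : ℝ), 0 < r →
      ∀ z₀ : ℂ, (∀ j, 4 * r ≤ ‖z₀ - z j‖) →
      Real.logb 2
          (sSup ((fun w => ‖∏ j, (w - z j)‖ ^ 2) '' ball z₀ (2 * r)) /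
            sInf ((fun w => ‖∏ j, (w - z j)‖ ^ 2) '' ball z₀ r)) ≤
        C * ∑ j, r / ‖z₀ - z j‖ := by
  have hlog2 : (0:ℝ) < Real.log 2 := Real.log_pos one_lt_two
  refine ⟨8 / Real.log 2, by positivity, ?_⟩
  intro Λ hΛ z r hr z₀ hd
  set d : Fin Λ → ℝ := fun j => ‖z₀ - z j‖ with hdd
  have hdpos : ∀ j, 0 < d j := fun j => lt_of_lt_of_le (by linarith) (hd j)
  have hdr : ∀ j, 0 < d j - r := fun j => by have := hd j; linarith
  set M : ℝ := ∏ j, (d j + 2*r)^2 with hM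
  set m : ℝ := ∏ j, (d j - r)^2 with hm
  have hmpos : 0 < m := Finset.prod_pos (fun j _ => pow_pos (hdr j) 2)
  have hMpos : 0 < M := Finset.prod_pos fun j _ => pow_pos (by have := hdpos j; linarith) 2
  have hfeq : ∀ w : ℂ, ‖∏ j, (w - z j)‖ ^ 2 = ∏ j, ‖w - z j‖ ^ 2 := by
    intro w; rw [norm_prod, ← Finset.prod_pow]
  -- upper bound on the 2r ball
  have hub : ∀ w ∈ ball z₀ (2*r), ‖∏ j, (w - z j)‖ ^ 2 ≤ M := by
    intro w hw
    rw [hfeq]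
    refine Finset.prod_le_prod (fun j _ => sq_nonneg _) (fun j _ => ?_)
    have h1 : ‖w - z j‖ ≤ d j + 2*r := by
      have he : w - z j = (w - z₀) + (z₀ - z j) := by ring
      have h2 : ‖w - z₀‖ < 2*r := by
        have := mem_ball.mp hw; rwa [Complex.dist_eq] at this
      have h3 : ‖z₀ - z j‖ = d j := rfl
      calc ‖w - z j‖ ≤ ‖w - z₀‖ + ‖z₀ - z j‖ := by
            rw [he]; exact norm_add_le _ _
        _ ≤ d j + 2*r := by rw [h3]; linarith
    exact pow_le_pow_left₀ (norm_nonneg _) h1 2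
  -- lower bound on the r ball
  have hlb : ∀ w ∈ ball z₀ r, m ≤ ‖∏ j, (w - z j)‖ ^ 2 := by
    intro w hw
    rw [hfeq]
    refine Finset.prod_le_prod (fun j _ => sq_nonneg _) (fun j _ => ?_)
    have h2 : ‖z₀ - w‖ < r := by
      have := mem_ball.mp hw; rw [Complex.dist_eq] at this; rwa [norm_sub_rev]
    have h3 : (d j : ℝ) ≤ ‖z₀ - w‖ + ‖w - z j‖ :=
      norm_sub_le_norm_sub_add_norm_sub z₀ w (z j)
    have h1 : d j - r ≤ ‖w - z j‖ := by linarith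
    exact pow_le_pow_left₀ (hdr j).le h1 2
  set S₁ := (fun w => ‖∏ j, (w - z j)‖ ^ 2) '' ball z₀ (2 * r) with hS1
  set S₂ := (fun w => ‖∏ j, (w - z j)‖ ^ 2) '' ball z₀ r with hS2
  have hne1 : S₁.Nonempty := ⟨_, Set.mem_image_of_mem _ (mem_ball_self (by linarith))⟩
  have hne2 : S₂.Nonempty := ⟨_, Set.mem_image_of_mem _ (mem_ball_self hr)⟩
  have hbdd : BddAbove S₁ := ⟨M, by rintro x ⟨w, hw, rfl⟩; exact hub w hw⟩
  have hsup_le : sSup S₁ ≤ M := csSup_le hne1 (by rintro x ⟨w, hw, rfl⟩; exact hub w hw)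
  have hinf_ge : m ≤ sInf S₂ := le_csInf hne2 (by rintro x ⟨w, hw, rfl⟩; exact hlb w hw)
  have hfz₀ : 0 < ‖∏ j, ((z₀:ℂ) - z j)‖ ^ 2 := by
    rw [hfeq]
    exact Finset.prod_pos fun j _ => pow_pos (hdpos j) 2
  have hsup_pos : 0 < sSup S₁ :=
    lt_of_lt_of_le hfz₀ (le_csSup hbdd (Set.mem_image_of_mem _ (mem_ball_self (by linarith))))
  have hinf_pos : 0 < sInf S₂ := lt_of_lt_of_le hmpos hinf_ge
  have hratio : sSup S₁ / sInf S₂ ≤ M / m := div_le_div₀ hMpos.le hsup_le hmpos hinf_ge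
  have hratio_pos : 0 < sSup S₁ / sInf S₂ := div_pos hsup_pos hinf_pos
  have hmono : Real.logb 2 (sSup S₁ / sInf S₂) ≤ Real.logb 2 (M / m) :=
    Real.logb_le_logb_of_le one_lt_two hratio_pos hratio
  have hMm : M / m = ∏ j, ((d j + 2*r)^2 / (d j - r)^2) := by
    rw [hM, hm, ← Finset.prod_div_distrib]
  have hlogsum : Real.log (M/m) = ∑ j, Real.log ((d j + 2*r)^2 / (d j - r)^2) := by
    rw [hMm]
    exact Real.log_prod fun j _ =>
      ne_of_gt (div_pos (pow_pos (by linarith [hdpos j]) 2) (pow_pos (hdr j) 2))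
  have hterm : ∀ j, Real.log ((d j + 2*r)^2 / (d j - r)^2) ≤ 8 * (r / d j) := by
    intro j
    have hq : (d j + 2*r)^2 / (d j - r)^2 = ((d j + 2*r)/(d j - r))^2 := (div_pow _ _ 2).symm
    rw [hq, Real.log_pow]
    have h2 : Real.log ((d j + 2*r)/(d j - r)) ≤ (d j + 2*r)/(d j - r) - 1 :=
      Real.log_le_sub_one_of_pos (div_pos (by linarith [hdpos j]) (hdr j))
    have h3 : (d j + 2*r)/(d j - r) - 1 = 3*r/(d j - r) := by
      rw [div_sub_one (hdr j).ne']
      congr 1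
      ring
    have h4 : 3*r/(d j - r) ≤ 4*r / d j := by
      rw [div_le_div_iff₀ (hdr j) (hdpos j)]
      nlinarith [hd j]
    have h5 : 4*r / d j = 4 * (r / d j) := by ring
    push_cast
    nlinarith [h2, h3.le, h4, h5.le]
  have hsum : Real.log (M/m) ≤ ∑ j, 8 * (r / d j) := by
    rw [hlogsum]
    exact Finset.sum_le_sum fun j _ => hterm j
  calc Real.logb 2 (sSup S₁ / sInf S₂) ≤ Real.logb 2 (M / m) := hmono
    _ = Real.log (M/m) / Real.log 2 := rfl
    _ ≤ (∑ j, 8 * (r / d j)) / Real.log 2 := (div_le_div_iff_of_pos_right hlog2).mpr hsum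
    _ = 8 / Real.log 2 * ∑ j, r / d j := by rw [← Finset.mul_sum]; ring
end

section
/- For every δ ∈ (0,1] there exists a constant C > 0, depending only on δ, with the following property. For every integer n ≥ 1, every monic polynomial P of degree n, and every a > 0, there exists a finite collection of balls B(x₁,r₁), …, B(x_k,r_k) whose union contains the set { z ∈ B(0,1) : |P(z)| < e^{−a} } and such that ∑_{j=1}^{k} r_j^δ ≤ C·e^{−a·δ/n}. -/
open Metric

open scoped Classical in
/-- Factorial lower bound: `n^n ≤ n! * e^n`. -/
lemma fact_lower (n : ℕ) : (n : ℝ) ^ n ≤ (n.factorial : ℝ) * Real.exp 1 ^ n := by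
  induction n with
  | zero => simp
  | succ n ih =>
    push_cast
    have hbase : ((n : ℝ) + 1) ^ n ≤ (n : ℝ) ^ n * Real.exp 1 := by
      rcases Nat.eq_zero_or_pos n with h | h
      · simp [h, Real.exp_pos 1 |>.le, (by linarith [Real.add_one_le_exp (1:ℝ)] : (1:ℝ) ≤ Real.exp 1)]
      · have hn : (0:ℝ) < n := by exact_mod_cast h
        have h1 : ((n : ℝ) + 1) ^ n = (n : ℝ) ^ n * (1 + 1 / n) ^ n := by
          rw [← mul_pow]; congr 1; field_simp
        have h2 : ((1 : ℝ) + 1 / n) ^ n ≤ Real.exp (1 / n) ^ n := by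
          apply pow_le_pow_left₀ (by positivity)
          have := Real.add_one_le_exp (1 / (n:ℝ)); linarith
        have h3 : Real.exp (1 / (n:ℝ)) ^ n = Real.exp 1 := by
          rw [← Real.exp_nat_mul, mul_one_div, div_self hn.ne']
        rw [h1, ← h3]
        exact mul_le_mul_of_nonneg_left h2 (by positivity)
    calc ((n:ℝ) + 1) ^ (n + 1) = ((n:ℝ) + 1) ^ n * ((n:ℝ) + 1) := by ring
      _ ≤ ((n : ℝ) ^ n * Real.exp 1) * ((n:ℝ) + 1) := by
          exact mul_le_mul_of_nonneg_right hbase (by positivity)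
      _ ≤ (((n).factorial : ℝ) * Real.exp 1 ^ n * Real.exp 1) * ((n:ℝ) + 1) := by
          have := mul_le_mul_of_nonneg_right ih (Real.exp_pos 1).le
          exact mul_le_mul_of_nonneg_right (by nlinarith [Real.exp_pos 1]) (by positivity)
      _ = ((n+1).factorial : ℝ) * Real.exp 1 ^ (n+1) := by
          push_cast [Nat.factorial_succ]; ring


open scoped Classical in
/-- Cartan's selection lemma: given a multiset of points in `ℂ` and a monotone
radius scale `lam`, one can select finitely many disks such that any point
outside the (doubled) disks is `lam m`-far from all but at most `m-1` points. -/
lemma cartan_select (lam : ℕ → ℝ) (hmono : Monotone lam) (hpos : 0 < lam 1) :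
    ∀ (N : ℕ) (s : Multiset ℂ), Multiset.card s ≤ N →
    ∃ (k : ℕ) (x : Fin k → ℂ) (p : Fin k → ℕ),
      (∀ j, 1 ≤ p j) ∧ (∑ j, p j) = Multiset.card s ∧
      ∀ z : ℂ, (∀ j, 2 * lam (p j) < dist z (x j)) →
        ∀ m : ℕ, 1 ≤ m → s.countP (fun w => dist z w ≤ lam m) < m := by
  intro N
  induction N with
  | zero =>
    intro s hs
    refine ⟨0, Fin.elim0, Fin.elim0, fun j => j.elim0, by simpa using (Nat.le_zero.1 hs).symm,
      fun z hz m hm => ?_⟩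
    calc s.countP _ ≤ Multiset.card s := Multiset.countP_le_card _ _
      _ < m := lt_of_le_of_lt hs (by omega)
  | succ N ih =>
    intro s hs
    rcases eq_or_ne s 0 with rfl | hne
    · refine ⟨0, Fin.elim0, Fin.elim0, fun j => j.elim0, by simp, fun z hz m hm => ?_⟩
      simp; omega
    -- the set of admissible sizes
    set S : Finset ℕ := (Finset.Icc 1 (Multiset.card s)).filter
      (fun q => ∃ x : ℂ, q ≤ s.countP fun w => dist x w ≤ lam q) with hS
    obtain ⟨w, hw⟩ := Multiset.exists_mem_of_ne_zero hne
    have hcardpos : 1 ≤ Multiset.card s := Multiset.card_pos.2 hne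
    have h1S : 1 ∈ S := by
      refine Finset.mem_filter.2 ⟨Finset.mem_Icc.2 ⟨le_refl 1, hcardpos⟩, ⟨w, ?_⟩⟩
      exact Multiset.countP_pos.2 ⟨w, hw, by simp [hpos.le]⟩
    set p1 : ℕ := S.max' ⟨1, h1S⟩ with hp1def
    have hp1S : p1 ∈ S := S.max'_mem _
    have hp1max : ∀ q ∈ S, q ≤ p1 := fun q hq => S.le_max' q hq
    obtain ⟨hp1Icc, x1, hx1⟩ := Finset.mem_filter.1 hp1S
    obtain ⟨hp1ge, hp1le⟩ := Finset.mem_Icc.1 hp1Icc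
    set t : Multiset ℂ := s.filter (fun w => dist x1 w ≤ lam p1) with ht
    set s' : Multiset ℂ := s.filter (fun w => ¬ dist x1 w ≤ lam p1) with hs'
    have hts : t + s' = s := Multiset.filter_add_not _ s
    have htcard_ge : p1 ≤ Multiset.card t := by
      rw [ht, ← Multiset.countP_eq_card_filter]; exact hx1
    have htcard_le : Multiset.card t ≤ p1 := by
      by_contra hq
      push_neg at hq
      have hqcard : Multiset.card t ≤ Multiset.card s :=
        Multiset.card_le_card (Multiset.filter_le _ s)
      have : Multiset.card t ∈ S := by
        refine Finset.mem_filter.2 ⟨Finset.mem_Icc.2 ⟨le_trans hp1ge (le_of_lt hq), hqcard⟩,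
          ⟨x1, ?_⟩⟩
        rw [Multiset.countP_eq_card_filter]
        refine le_trans ?_ (Multiset.card_le_card
          (Multiset.monotone_filter_right s (fun w h => le_trans h (hmono (le_of_lt hq)))))
        exact le_refl _
      exact absurd (hp1max _ this) (not_le.2 hq)
    have htcard : Multiset.card t = p1 := le_antisymm htcard_le htcard_ge
    have hs'card : Multiset.card s' = Multiset.card s - p1 := by
      have := congrArg Multiset.card hts
      rw [Multiset.card_add, htcard] at this; omega
    have hs'le : Multiset.card s' ≤ N := by omega
    obtain ⟨k, x, p, hp1', hsum, hcount⟩ := ih s' hs'le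
    refine ⟨k + 1, Fin.cons x1 x, Fin.cons p1 p, ?_, ?_, ?_⟩
    · intro j
      refine Fin.cases ?_ ?_ j
      · simpa using hp1ge
      · intro i; simpa using hp1' i
    · rw [Fin.sum_cons, hsum, hs'card]; omega
    · intro z hz m hm
      have hz0 : 2 * lam p1 < dist z x1 := by simpa using hz 0
      have hztail : ∀ j, 2 * lam (p j) < dist z (x j) := by
        intro j; simpa using hz j.succ
      have hsplit : s.countP (fun w => dist z w ≤ lam m)
          = t.countP (fun w => dist z w ≤ lam m) + s'.countP (fun w => dist z w ≤ lam m) := by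
        rw [← hts, Multiset.countP_add]
      rcases le_or_gt m p1 with hmp | hmp
      · -- no point of t is within lam m of z
        have htzero : t.countP (fun w => dist z w ≤ lam m) = 0 := by
          rw [Multiset.countP_eq_zero]
          intro w hwt hle
          have hwd : dist x1 w ≤ lam p1 := (Multiset.mem_filter.1 hwt).2
          have : dist z x1 ≤ dist z w + dist w x1 := dist_triangle z w x1
          rw [dist_comm w x1] at this
          have : dist z w > lam p1 := by linarith
          exact absurd hle (not_le.2 (lt_of_le_of_lt (hmono hmp) this))
        rw [hsplit, htzero, zero_add]
        exact hcount z hztail m hm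
      · rcases le_or_gt m (Multiset.card s) with hmc | hmc
        · by_contra hcon
          push_neg at hcon
          have : m ∈ S := Finset.mem_filter.2 ⟨Finset.mem_Icc.2 ⟨hm, hmc⟩, ⟨z, hcon⟩⟩
          exact absurd (hp1max _ this) (not_le.2 hmp)
        · exact lt_of_le_of_lt (Multiset.countP_le_card _ _) hmc


open scoped Classical in
/-- If at most `m-1` points of `s` are within distance `lam m` of `z` for each `m`,
then the product of distances is at least `∏ lam m`. -/
lemma prod_dist_lower (lam : ℕ → ℝ) (hlam : ∀ m, 0 ≤ lam m) (z : ℂ) :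
    ∀ (N : ℕ) (s : Multiset ℂ), Multiset.card s = N →
    (∀ m : ℕ, 1 ≤ m → s.countP (fun w => dist z w ≤ lam m) < m) →
    (∏ m ∈ Finset.range N, lam (m + 1)) ≤ (s.map fun w => dist z w).prod := by
  intro N
  induction N with
  | zero =>
    intro s hs _
    rw [Multiset.card_eq_zero] at hs
    simp [hs]
  | succ N ih =>
    intro s hs hcount
    have h1 := hcount (N + 1) (by omega)
    have : ∃ w ∈ s, ¬ dist z w ≤ lam (N + 1) := by
      by_contra h
      push_neg at h
      have := Multiset.countP_eq_card.2 (fun w hw => h w hw)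
      omega
    obtain ⟨w, hw, hwd⟩ := this
    push_neg at hwd
    have hse : w ::ₘ s.erase w = s := Multiset.cons_erase hw
    have hcard' : Multiset.card (s.erase w) = N := by
      have := congrArg Multiset.card hse
      rw [Multiset.card_cons] at this; omega
    have hcount' : ∀ m : ℕ, 1 ≤ m →
        (s.erase w).countP (fun w' => dist z w' ≤ lam m) < m := fun m hm =>
      lt_of_le_of_lt (Multiset.countP_le_of_le _ (Multiset.erase_le w s)) (hcount m hm)
    have hprod : (s.map fun w' => dist z w').prod
        = dist z w * ((s.erase w).map fun w' => dist z w').prod := by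
      conv_lhs => rw [← hse]
      rw [Multiset.map_cons, Multiset.prod_cons]
    rw [hprod, Finset.prod_range_succ]
    have hnn : (0:ℝ) ≤ ∏ m ∈ Finset.range N, lam (m + 1) :=
      Finset.prod_nonneg fun i _ => hlam _
    exact mul_le_mul (ih (s.erase w) hcard' hcount') hwd.le (hlam _)
      (le_trans hnn (ih (s.erase w) hcard' hcount')) |>.trans_eq (by ring)



lemma prod_range_fact (n : ℕ) : (∏ m ∈ Finset.range n, ((m : ℝ) + 1)) = (n.factorial : ℝ) := by
  induction n with
  | zero => simp
  | succ n ih => rw [Finset.prod_range_succ, ih, Nat.factorial_succ]; push_cast; ring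



/-- Lemma 6.1 (Cartan's lemma): the sublevel set `{|P| < e^{−a}}` of a monic
polynomial of degree `n` inside the unit disk can be covered by finitely many
balls whose radii satisfy `∑ rⱼ^δ ≤ C e^{−aδ/n}`. -/
theorem cartan_sublevel_cover (δ : ℝ) (hδ0 : 0 < δ) (hδ1 : δ ≤ 1) :
    ∃ C > (0 : ℝ), ∀ (n : ℕ), 1 ≤ n → ∀ (P : Polynomial ℂ),
      P.Monic → P.natDegree = n → ∀ (a : ℝ), 0 < a →
      ∃ (k : ℕ) (x : Fin k → ℂ) (rad : Fin k → ℝ),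
        (∀ j, 0 ≤ rad j) ∧
        ({z : ℂ | z ∈ ball (0 : ℂ) 1 ∧ ‖P.eval z‖ < Real.exp (-a)} ⊆
          ⋃ j, ball (x j) (rad j)) ∧
        (∑ j, rad j ^ δ) ≤ C * Real.exp (-(a * δ) / n) := by
  classical
  refine ⟨9, by norm_num, ?_⟩
  intro n hn P hmonic hdeg a ha
  have hn0 : (0:ℝ) < n := by exact_mod_cast hn
  have hδne : δ ≠ 0 := hδ0.ne'
  set E : ℝ := Real.exp (1/δ - a/n) with hE
  set lam : ℕ → ℝ := fun m => ((m : ℝ)/n) ^ (1/δ : ℝ) * E with hlam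
  have hlam_nonneg : ∀ m, 0 ≤ lam m := by
    intro m; apply mul_nonneg (Real.rpow_nonneg (by positivity) _) (Real.exp_pos _).le
  have hmono : Monotone lam := by
    intro m m' h
    have hmm : (m:ℝ) ≤ m' := by exact_mod_cast h
    apply mul_le_mul_of_nonneg_right _ (Real.exp_pos _).le
    exact Real.rpow_le_rpow (by positivity) (by gcongr) (by positivity)
  have hpos : ∀ m, 1 ≤ m → 0 < lam m := by
    intro m hm
    apply mul_pos (Real.rpow_pos_of_pos ?_ _) (Real.exp_pos _)
    have : (0:ℝ) < m := by exact_mod_cast hm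
    positivity
  -- roots of P
  have hsplits : P.Splits := IsAlgClosed.splits P
  have hroots : Multiset.card P.roots = n := by
    rw [Polynomial.splits_iff_card_roots.1 hsplits, hdeg]
  have hPeval : ∀ z : ℂ, ‖P.eval z‖ = (P.roots.map fun w => dist z w).prod := by
    intro z
    conv_lhs => rw [hsplits.eq_prod_roots_of_monic hmonic]
    rw [Polynomial.eval_multiset_prod, Multiset.map_map, ← normHom_apply, map_multiset_prod, Multiset.map_map]
    apply congrArg
    apply Multiset.map_congr rfl
    intro w _
    simp [Complex.dist_eq]
  obtain ⟨k, x, p, hp1, hsum, hcount⟩ :=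
    cartan_select lam hmono (hpos 1 le_rfl) (Multiset.card P.roots) P.roots le_rfl
  refine ⟨k, x, fun j => 3 * lam (p j), fun j => by positivity, ?_, ?_⟩
  · -- covering
    intro z hz
    obtain ⟨_, habs⟩ := hz
    by_contra hnot
    rw [Set.mem_iUnion] at hnot
    push_neg at hnot
    have hfar : ∀ j, 2 * lam (p j) < dist z (x j) := by
      intro j
      have h3 : 3 * lam (p j) ≤ dist z (x j) := by
        have := hnot j; rwa [mem_ball, not_lt] at this
      have := hpos (p j) (hp1 j)
      linarith
    have hc := hcount z hfar
    have hprodlow := prod_dist_lower lam hlam_nonneg z (Multiset.card P.roots) P.roots rfl hc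
    -- lower bound on the product of lam's
    have key : Real.exp (-a) ≤ ∏ m ∈ Finset.range (Multiset.card P.roots), lam (m + 1) := by
      rw [hroots]
      have hprod_eq : (∏ m ∈ Finset.range n, lam (m + 1))
          = ((∏ m ∈ Finset.range n, (((m:ℝ) + 1)/n)) ^ (1/δ : ℝ)) * E ^ n := by
        rw [hlam]
        simp only
        rw [Finset.prod_mul_distrib, Finset.prod_const, Finset.card_range,
          ← Real.finset_prod_rpow _ _ (fun i _ => by positivity)]
        congr 1
        apply Finset.prod_congr rfl
        intro m _
        push_cast
        ring_nf
      have hfact : (∏ m ∈ Finset.range n, (((m:ℝ) + 1)/n)) = (n.factorial : ℝ) / (n:ℝ)^n := by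
        rw [Finset.prod_div_distrib, prod_range_fact, Finset.prod_const, Finset.card_range]
      have hfl : Real.exp (-(n:ℝ)) ≤ (n.factorial : ℝ) / (n:ℝ)^n := by
        have h1 := fact_lower n
        rw [le_div_iff₀ (by positivity)]
        have h2 : Real.exp 1 ^ n = Real.exp (n:ℝ) := by
          rw [← Real.exp_nat_mul, mul_one]
        rw [h2] at h1
        have hmul : Real.exp (-(n:ℝ)) * Real.exp (n:ℝ) = 1 := by
          rw [← Real.exp_add]; simp
        nlinarith [Real.exp_pos (-(n:ℝ)), Real.exp_pos ((n:ℝ))]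
      rw [hprod_eq, hfact]
      have h2 : Real.exp (-(n:ℝ)) ^ (1/δ:ℝ) ≤ ((n.factorial : ℝ) / (n:ℝ)^n) ^ (1/δ:ℝ) :=
        Real.rpow_le_rpow (Real.exp_pos _).le hfl (by positivity)
      rw [← Real.exp_mul] at h2
      have hEn : E ^ n = Real.exp ((n:ℝ) * (1/δ - a/n)) := (Real.exp_nat_mul _ n).symm
      calc Real.exp (-a)
          = Real.exp (-(n:ℝ) * (1/δ)) * Real.exp ((n:ℝ) * (1/δ - a/n)) := by
            rw [← Real.exp_add]; congr 1; field_simp; ring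
        _ ≤ ((n.factorial : ℝ) / (n:ℝ)^n) ^ (1/δ:ℝ) * Real.exp ((n:ℝ) * (1/δ - a/n)) :=
            mul_le_mul_of_nonneg_right h2 (Real.exp_pos _).le
        _ = _ := by rw [hEn]
    exact absurd habs (not_lt.2 (le_trans key (hprodlow.trans_eq (hPeval z).symm)))
  · -- sum of radii
    have hterm : ∀ j, (3 * lam (p j)) ^ δ = 3 ^ δ * E ^ δ * ((p j : ℝ)/n) := by
      intro j
      rw [hlam]
      simp only
      rw [Real.mul_rpow (by norm_num) (hlam_nonneg (p j)), Real.mul_rpow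
        (Real.rpow_nonneg (by positivity) _) (Real.exp_pos _).le,
        ← Real.rpow_mul (by positivity), one_div_mul_cancel hδne, Real.rpow_one]
      ring
    rw [Finset.sum_congr rfl (fun j _ => hterm j), ← Finset.mul_sum]
    have hsum' : (∑ j, ((p j : ℝ)/n)) = 1 := by
      rw [← Finset.sum_div]
      rw [div_eq_one_iff_eq hn0.ne']
      rw [← hroots, ← hsum]
      push_cast
      ring
    rw [hsum', mul_one]
    have hEδ : E ^ δ = Real.exp 1 * Real.exp (-(a * δ) / n) := by
      rw [hE, ← Real.exp_mul, ← Real.exp_add]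
      congr 1
      field_simp
      ring
    rw [hEδ, ← mul_assoc]
    apply mul_le_mul_of_nonneg_right _ (Real.exp_pos _).le
    have h3δ : (3:ℝ) ^ δ ≤ 3 := by
      calc (3:ℝ) ^ δ ≤ (3:ℝ) ^ (1:ℝ) := Real.rpow_le_rpow_of_exponent_le (by norm_num) hδ1
        _ = 3 := Real.rpow_one 3
    have he3 : Real.exp 1 < 3 := by
      have := Real.exp_one_lt_d9; linarith
    nlinarith [Real.exp_pos 1, Real.rpow_nonneg (by norm_num : (0:ℝ) ≤ 3) δ]
end

section
/- There exists a universal constant C > 0 with the following property. Let Λ > 0 and define F : ℂ → ℂ by F(z) = exp(Λ·z). Then for every z ∈ ℂ and every r > 0: (a) N_F(z,r) = N_F(0,r), i.e. the frequency of F is independent of the base point; and (b) N_F(z,r) ≥ Λ·r/2 − C. -/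
open MeasureTheory Metric

namespace ExpSharp

/-- The squared modulus of `exp (Λ z)`. -/
lemma abs_sq (Λ : ℝ) (w : ℂ) :
    ‖Complex.exp (Λ * w)‖ ^ 2 = Real.exp (2 * Λ * w.re) := by
  rw [Complex.norm_exp, ← Real.exp_nat_mul]
  congr 1
  simp [Complex.mul_re]
  ring

lemma g_cont (Λ : ℝ) : Continuous fun z : ℂ => Real.exp (2 * Λ * z.re) := by
  fun_prop

lemma g_intOn (Λ : ℝ) (x : ℂ) (r : ℝ) :
    IntegrableOn (fun z : ℂ => Real.exp (2 * Λ * z.re)) (ball x r) volume := by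
  have := ((g_cont Λ).continuousOn (s := closedBall x r)).integrableOn_compact
      (μ := volume) (isCompact_closedBall x r)
  exact this.mono_set ball_subset_closedBall

/-- Translation formula for the integral of `exp(2Λ Re z)` over a ball. -/
lemma integral_ball_translate (Λ : ℝ) (x : ℂ) (r : ℝ) :
    ∫ z in ball x r, Real.exp (2 * Λ * z.re) ∂volume
      = Real.exp (2 * Λ * x.re) * ∫ z in ball (0 : ℂ) r, Real.exp (2 * Λ * z.re) ∂volume := by
  have hmp : MeasurePreserving (fun z : ℂ => x + z) volume volume :=
    measurePreserving_add_left volume x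
  have hemb : MeasurableEmbedding (fun z : ℂ => x + z) :=
    (MeasurableEquiv.addLeft x).measurableEmbedding
  have hpre : (fun z : ℂ => x + z) ⁻¹' ball x r = ball (0 : ℂ) r := by
    ext z
    simp [Metric.mem_ball, dist_eq_norm]
  calc ∫ z in ball x r, Real.exp (2 * Λ * z.re) ∂volume
      = ∫ z in (fun z : ℂ => x + z) ⁻¹' ball x r,
          Real.exp (2 * Λ * (x + z).re) ∂volume := by
        exact (hmp.setIntegral_preimage_emb hemb
          (fun z => Real.exp (2 * Λ * z.re)) (ball x r)).symm
    _ = ∫ z in ball (0 : ℂ) r, Real.exp (2 * Λ * x.re) * Real.exp (2 * Λ * z.re) ∂volume := by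
        rw [hpre]
        congr 1
        ext z
        rw [← Real.exp_add]
        congr 1
        simp [Complex.add_re]
        ring
    _ = Real.exp (2 * Λ * x.re) * ∫ z in ball (0 : ℂ) r, Real.exp (2 * Λ * z.re) ∂volume := by
        rw [integral_const_mul]

lemma integral_pos (Λ : ℝ) {r : ℝ} (hr : 0 < r) (x : ℂ) :
    0 < ∫ z in ball x r, Real.exp (2 * Λ * z.re) ∂volume := by
  apply setIntegral_pos_iff_support_of_nonneg_ae ?_ (g_intOn Λ x r) |>.2
  · have : (Function.support fun z : ℂ => Real.exp (2 * Λ * z.re)) = Set.univ := by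
      ext z; simp [Real.exp_ne_zero]
    rw [this, Set.univ_inter]
    exact measure_ball_pos volume x hr
  · filter_upwards with z using (Real.exp_pos _).le

end ExpSharp

/-- The sharpness example `F(z) = exp(Λz)`: its frequency is independent of the
base point, and `N_F(z,r) ≥ Λr/2 − C` for a universal constant `C`. -/
theorem exp_sharpness_example :
    ∃ C > (0 : ℝ), ∀ (Λ : ℝ), 0 < Λ → ∀ (z : ℂ) (r : ℝ), 0 < r →
      freq (fun w => Complex.exp (Λ * w)) z r = freq (fun w => Complex.exp (Λ * w)) 0 r ∧
      Λ * r / 2 - C ≤ freq (fun w => Complex.exp (Λ * w)) z r := by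
  refine ⟨2, by norm_num, fun Λ hΛ z r hr => ?_⟩
  set g : ℂ → ℝ := fun z => Real.exp (2 * Λ * z.re) with hg
  -- rewrite freq in terms of g
  have habs : ∀ (x : ℂ) (s : ℝ),
      (⨍ w in ball x s, ‖Complex.exp (Λ * w)‖ ^ 2 ∂volume)
        = ⨍ w in ball x s, g w ∂volume := by
    intro x s
    apply setAverage_congr_fun (measurableSet_ball) (Filter.Eventually.of_forall ?_)
    intro w _
    exact ExpSharp.abs_sq Λ w
  have hfreq : ∀ x : ℂ, freq (fun w => Complex.exp (Λ * w)) x r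
      = Real.logb 2 ((⨍ w in ball x (2 * r), g w ∂volume) / (⨍ w in ball x r, g w ∂volume)) := by
    intro x
    unfold freq
    rw [habs, habs]
  -- volumes
  have hvol : ∀ (x : ℂ) (s : ℝ), 0 ≤ s → (volume (ball x s)).toReal = Real.pi * s ^ 2 := by
    intro x s hs
    rw [Complex.volume_ball, ← ENNReal.ofReal_pow hs, ENNReal.toReal_mul,
      ENNReal.toReal_ofReal (pow_nonneg hs 2)]
    simp [mul_comm]
  have havg : ∀ (x : ℂ) (s : ℝ), 0 ≤ s →
      (⨍ w in ball x s, g w ∂volume)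
        = (Real.pi * s ^ 2)⁻¹ * ∫ w in ball x s, g w ∂volume := by
    intro x s hs
    rw [setAverage_eq, measureReal_def, hvol x s hs, smul_eq_mul]
  -- notation for integrals over balls centered at 0
  set I1 : ℝ := ∫ w in ball (0 : ℂ) r, g w ∂volume with hI1
  set I2 : ℝ := ∫ w in ball (0 : ℂ) (2 * r), g w ∂volume with hI2
  have hI1pos : 0 < I1 := ExpSharp.integral_pos Λ hr 0
  have hI2pos : 0 < I2 := ExpSharp.integral_pos Λ (by linarith) 0
  -- ratio at any center equals ratio at 0
  have hratio : ∀ x : ℂ,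
      (⨍ w in ball x (2 * r), g w ∂volume) / (⨍ w in ball x r, g w ∂volume)
        = I2 / (4 * I1) := by
    intro x
    rw [havg x (2*r) (by linarith), havg x r hr.le, ExpSharp.integral_ball_translate Λ x (2 * r),
      ExpSharp.integral_ball_translate Λ x r, ← hI1, ← hI2]
    have hπ : (0:ℝ) < Real.pi := Real.pi_pos
    have he : (0:ℝ) < Real.exp (2 * Λ * x.re) := Real.exp_pos _
    field_simp
    ring
  have hfreq' : ∀ x : ℂ, freq (fun w => Complex.exp (Λ * w)) x r = Real.logb 2 (I2 / (4 * I1)) := by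
    intro x
    rw [hfreq, hratio]
  constructor
  · rw [hfreq' z, hfreq' 0]
  · rw [hfreq' z]
    -- key estimate: I2 ≥ exp(2Λr) * I1
    have hsub : ball ((r : ℂ)) r ⊆ ball (0 : ℂ) (2 * r) := by
      intro w hw
      rw [mem_ball] at hw ⊢
      have : dist w 0 ≤ dist w (r : ℂ) + dist (r : ℂ) 0 := dist_triangle _ _ _
      have hrr : dist (r : ℂ) 0 = r := by
        simp [Complex.dist_eq, Complex.norm_real, abs_of_pos hr]
      linarith
    have hkey : Real.exp (2 * Λ * r) * I1 ≤ I2 := by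
      have h1 : ∫ w in ball ((r : ℂ)) r, g w ∂volume = Real.exp (2 * Λ * r) * I1 := by
        rw [ExpSharp.integral_ball_translate Λ ((r : ℂ)) r]
        simp
        rfl
      rw [← h1]
      apply setIntegral_mono_set (ExpSharp.g_intOn Λ 0 (2 * r))
      · filter_upwards with w using (Real.exp_pos _).le
      · exact Filter.Eventually.of_forall hsub
    -- conclude
    have hlog2 : Real.log 2 < 1 := by
      have := Real.log_two_lt_d9
      linarith
    have hlog2pos : 0 < Real.log 2 := Real.log_pos (by norm_num)
    have hx : (0:ℝ) < Real.exp (2 * Λ * r) / 4 := by positivity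
    have hle : Real.exp (2 * Λ * r) / 4 ≤ I2 / (4 * I1) := by
      rw [div_le_div_iff₀ (by norm_num) (by positivity)]
      nlinarith
    have hmono : Real.logb 2 (Real.exp (2 * Λ * r) / 4) ≤ Real.logb 2 (I2 / (4 * I1)) :=
      Real.logb_le_logb_of_le (by norm_num) hx hle
    have hval : Real.logb 2 (Real.exp (2 * Λ * r) / 4) = (2 * Λ * r) / Real.log 2 - 2 := by
      rw [Real.logb_div (Real.exp_ne_zero _) (by norm_num), Real.logb, Real.log_exp]
      have h4 : Real.logb 2 4 = 2 := by
        rw [Real.logb, show (4:ℝ) = 2 ^ (2:ℕ) by norm_num, Real.log_pow]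
        have : Real.log 2 ≠ 0 := (Real.log_pos (by norm_num)).ne'
        field_simp
        norm_num
      rw [Real.logb] at h4 ⊢
      rw [h4]
    have : Λ * r / 2 ≤ (2 * Λ * r) / Real.log 2 := by
      rw [div_le_div_iff₀ (by norm_num) hlog2pos]
      nlinarith [mul_pos hΛ hr]
    rw [hval] at hmono
    linarith
end

section
/- Let Ω ⊂ ℝ² be open and let u : ℝ² → ℝ be three times continuously differentiable on Ω. Let p ∈ Ω be a point with ∇u(p) ≠ 0. Then, at the point p, Δ(log |∇u|) = div( (Δu / |∇u|²) · ∇u ); explicitly, writing w = log √(u_x² + u_y²) on the neighborhood of p where ∇u ≠ 0 and Δu = u_{xx} + u_{yy}, one has w_{xx}(p) + w_{yy}(p) = ∂_x( Δu·u_x/(u_x² + u_y²) )(p) + ∂_y( Δu·u_y/(u_x² + u_y²) )(p). -/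
open Filter Topology

private lemma pd_add {f g : ℝ × ℝ → ℝ} {p v : ℝ × ℝ}
    (hf : DifferentiableAt ℝ f p) (hg : DifferentiableAt ℝ g p) :
    fderiv ℝ (fun q => f q + g q) p v = fderiv ℝ f p v + fderiv ℝ g p v := by
  rw [fderiv_fun_add hf hg]; rfl

private lemma pd_mul {f g : ℝ × ℝ → ℝ} {p v : ℝ × ℝ}
    (hf : DifferentiableAt ℝ f p) (hg : DifferentiableAt ℝ g p) :
    fderiv ℝ (fun q => f q * g q) p v
      = fderiv ℝ f p v * g p + f p * fderiv ℝ g p v := by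
  rw [fderiv_fun_mul hf hg]
  simp [ContinuousLinearMap.add_apply, ContinuousLinearMap.smul_apply]
  ring

private lemma pd_sq {f : ℝ × ℝ → ℝ} {p v : ℝ × ℝ}
    (hf : DifferentiableAt ℝ f p) :
    fderiv ℝ (fun q => f q ^ 2) p v = 2 * f p * fderiv ℝ f p v := by
  simp only [sq]
  rw [pd_mul hf hf]; ring

private lemma pd_inv {g : ℝ × ℝ → ℝ} {p v : ℝ × ℝ}
    (hg : DifferentiableAt ℝ g p) (h0 : g p ≠ 0) :
    fderiv ℝ (fun q => (g q)⁻¹) p v = -fderiv ℝ g p v / g p ^ 2 := by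
  have h := ((hasDerivAt_inv h0).comp_hasFDerivAt p hg.hasFDerivAt).fderiv
  simp only [Function.comp_def] at h
  rw [h]
  simp [ContinuousLinearMap.smul_apply]
  field_simp

private lemma pd_div {f g : ℝ × ℝ → ℝ} {p v : ℝ × ℝ}
    (hf : DifferentiableAt ℝ f p) (hg : DifferentiableAt ℝ g p) (h0 : g p ≠ 0) :
    fderiv ℝ (fun q => f q / g q) p v
      = (fderiv ℝ f p v * g p - f p * fderiv ℝ g p v) / g p ^ 2 := by
  have h : (fun q => f q / g q) = fun q => f q * (g q)⁻¹ := by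
    funext q; rw [div_eq_mul_inv]
  rw [h, pd_mul hf (show DifferentiableAt ℝ (fun q => (g q)⁻¹) p from hg.inv h0), pd_inv hg h0]
  field_simp
  ring

private lemma pd_log {f : ℝ × ℝ → ℝ} {p v : ℝ × ℝ}
    (hf : DifferentiableAt ℝ f p) (h0 : f p ≠ 0) :
    fderiv ℝ (fun q => Real.log (f q)) p v = fderiv ℝ f p v / f p := by
  have h := (hf.hasFDerivAt.log h0).fderiv
  rw [h]
  simp [ContinuousLinearMap.smul_apply]
  ring

private lemma pd_div_const {f : ℝ × ℝ → ℝ} {p v : ℝ × ℝ} {c : ℝ}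
    (hf : DifferentiableAt ℝ f p) :
    fderiv ℝ (fun q => f q / c) p v = fderiv ℝ f p v / c := by
  have h : (fun q => f q / c) = fun q => c⁻¹ * f q := by
    funext q; rw [div_eq_mul_inv, mul_comm]
  rw [h, fderiv_const_mul hf]
  simp [ContinuousLinearMap.smul_apply]
  rw [div_eq_mul_inv, mul_comm]

private lemma diff_pd {f : ℝ × ℝ → ℝ} {p : ℝ × ℝ} (hf : ContDiffAt ℝ 2 f p) (v : ℝ × ℝ) :
    DifferentiableAt ℝ (fun q => fderiv ℝ f q v) p :=
  ((hf.fderiv_right (m := 1) (by norm_num)).clm_apply contDiffAt_const).differentiableAt one_ne_zero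

private lemma pd_pd {f : ℝ × ℝ → ℝ} {p : ℝ × ℝ} (hf : ContDiffAt ℝ 2 f p) (v w : ℝ × ℝ) :
    fderiv ℝ (fun q => fderiv ℝ f q v) p w = fderiv ℝ (fderiv ℝ f) p w v := by
  have hd : DifferentiableAt ℝ (fderiv ℝ f) p :=
    (hf.fderiv_right (m := 1) (by norm_num)).differentiableAt one_ne_zero
  rw [fderiv_clm_apply hd (differentiableAt_const v)]
  simp

private lemma pd_swap {f : ℝ × ℝ → ℝ} {p : ℝ × ℝ} (hf : ContDiffAt ℝ 2 f p) (v w : ℝ × ℝ) :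
    fderiv ℝ (fun q => fderiv ℝ f q v) p w = fderiv ℝ (fun q => fderiv ℝ f q w) p v := by
  rw [pd_pd hf v w, pd_pd hf w v]
  exact hf.isSymmSndFDerivAt (by simp [minSmoothness_of_isRCLikeNormedField]) w v

private theorem core (a b : ℝ × ℝ → ℝ) (p : ℝ × ℝ)
    (ha : ∀ᶠ q in 𝓝 p, ContDiffAt ℝ 2 a q)
    (hb : ∀ᶠ q in 𝓝 p, ContDiffAt ℝ 2 b q)
    (hsym : ∀ᶠ q in 𝓝 p, fderiv ℝ a q (0, 1) = fderiv ℝ b q (1, 0))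
    (hs : ∀ᶠ q in 𝓝 p, a q ^ 2 + b q ^ 2 ≠ 0) :
    fderiv ℝ (fun q => fderiv ℝ
        (fun r => Real.log (Real.sqrt (a r ^ 2 + b r ^ 2))) q (1, 0)) p (1, 0)
      + fderiv ℝ (fun q => fderiv ℝ
        (fun r => Real.log (Real.sqrt (a r ^ 2 + b r ^ 2))) q (0, 1)) p (0, 1)
    = fderiv ℝ (fun q => (fderiv ℝ a q (1, 0) + fderiv ℝ b q (0, 1)) * a q
        / (a q ^ 2 + b q ^ 2)) p (1, 0)
      + fderiv ℝ (fun q => (fderiv ℝ a q (1, 0) + fderiv ℝ b q (0, 1)) * b q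
        / (a q ^ 2 + b q ^ 2)) p (0, 1) := by
  -- rewrite log ∘ sqrt
  have hW : (fun r => Real.log (Real.sqrt (a r ^ 2 + b r ^ 2)))
      = fun r => Real.log (a r ^ 2 + b r ^ 2) / 2 := by
    funext r; rw [Real.log_sqrt (by positivity)]
  -- data at points near p
  have hev : ∀ᶠ q in 𝓝 p,
      ContDiffAt ℝ 2 a q ∧ ContDiffAt ℝ 2 b q ∧ a q ^ 2 + b q ^ 2 ≠ 0 :=
    ha.and (hb.and hs)
  have haP : ContDiffAt ℝ 2 a p := ha.self_of_nhds
  have hbP : ContDiffAt ℝ 2 b p := hb.self_of_nhds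
  have hsP : a p ^ 2 + b p ^ 2 ≠ 0 := hs.self_of_nhds
  have hdaP : DifferentiableAt ℝ a p := haP.differentiableAt two_ne_zero
  have hdbP : DifferentiableAt ℝ b p := hbP.differentiableAt two_ne_zero
  have hdsP : DifferentiableAt ℝ (fun q => a q ^ 2 + b q ^ 2) p :=
    (hdaP.pow 2).add (hdbP.pow 2)
  -- first derivatives of w near p
  have h1 : (fun q => fderiv ℝ
        (fun r => Real.log (Real.sqrt (a r ^ 2 + b r ^ 2))) q ((1 : ℝ), (0 : ℝ)))
      =ᶠ[𝓝 p] fun q => (a q * fderiv ℝ a q (1, 0) + b q * fderiv ℝ b q (1, 0))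
        / (a q ^ 2 + b q ^ 2) := by
    filter_upwards [hev] with q hq
    obtain ⟨hqa, hqb, hq0⟩ := hq
    have hda : DifferentiableAt ℝ a q := hqa.differentiableAt two_ne_zero
    have hdb : DifferentiableAt ℝ b q := hqb.differentiableAt two_ne_zero
    have hds : DifferentiableAt ℝ (fun r => a r ^ 2 + b r ^ 2) q :=
      (hda.pow 2).add (hdb.pow 2)
    have hdl : DifferentiableAt ℝ (fun r => Real.log (a r ^ 2 + b r ^ 2)) q :=
      hds.log hq0
    rw [hW, pd_div_const hdl, pd_log hds hq0, pd_add (hda.fun_pow 2) (hdb.fun_pow 2),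
      pd_sq hda, pd_sq hdb]
    field_simp
  have h2 : (fun q => fderiv ℝ
        (fun r => Real.log (Real.sqrt (a r ^ 2 + b r ^ 2))) q ((0 : ℝ), (1 : ℝ)))
      =ᶠ[𝓝 p] fun q => (a q * fderiv ℝ a q (0, 1) + b q * fderiv ℝ b q (0, 1))
        / (a q ^ 2 + b q ^ 2) := by
    filter_upwards [hev] with q hq
    obtain ⟨hqa, hqb, hq0⟩ := hq
    have hda : DifferentiableAt ℝ a q := hqa.differentiableAt two_ne_zero
    have hdb : DifferentiableAt ℝ b q := hqb.differentiableAt two_ne_zero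
    have hds : DifferentiableAt ℝ (fun r => a r ^ 2 + b r ^ 2) q :=
      (hda.pow 2).add (hdb.pow 2)
    have hdl : DifferentiableAt ℝ (fun r => Real.log (a r ^ 2 + b r ^ 2)) q :=
      hds.log hq0
    rw [hW, pd_div_const hdl, pd_log hds hq0, pd_add (hda.fun_pow 2) (hdb.fun_pow 2),
      pd_sq hda, pd_sq hdb]
    field_simp
  rw [h1.fderiv_eq, h2.fderiv_eq]
  -- differentiability of second-derivative entries at p
  have hdAx : DifferentiableAt ℝ (fun q => fderiv ℝ a q (1, 0)) p := diff_pd haP _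
  have hdAy : DifferentiableAt ℝ (fun q => fderiv ℝ a q (0, 1)) p := diff_pd haP _
  have hdBx : DifferentiableAt ℝ (fun q => fderiv ℝ b q (1, 0)) p := diff_pd hbP _
  have hdBy : DifferentiableAt ℝ (fun q => fderiv ℝ b q (0, 1)) p := diff_pd hbP _
  -- expand all four terms
  rw [pd_div ((hdaP.fun_mul hdAx).fun_add (hdbP.fun_mul hdBx)) hdsP hsP,
      pd_div ((hdaP.fun_mul hdAy).fun_add (hdbP.fun_mul hdBy)) hdsP hsP,
      pd_div ((hdAx.fun_add hdBy).fun_mul hdaP) hdsP hsP,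
      pd_div ((hdAx.fun_add hdBy).fun_mul hdbP) hdsP hsP,
      pd_add (hdaP.fun_mul hdAx) (hdbP.fun_mul hdBx),
      pd_add (hdaP.fun_mul hdAy) (hdbP.fun_mul hdBy),
      pd_mul hdaP hdAx, pd_mul hdbP hdBx, pd_mul hdaP hdAy, pd_mul hdbP hdBy,
      pd_mul (hdAx.fun_add hdBy) hdaP, pd_mul (hdAx.fun_add hdBy) hdbP,
      pd_add hdAx hdBy, pd_add hdAx hdBy,
      pd_add (hdaP.fun_pow 2) (hdbP.fun_pow 2), pd_add (hdaP.fun_pow 2) (hdbP.fun_pow 2),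
      pd_sq hdaP, pd_sq hdbP, pd_sq hdaP, pd_sq hdbP]
  -- symmetry facts
  have hsymP : fderiv ℝ a p (0, 1) = fderiv ℝ b p (1, 0) := hsym.self_of_nhds
  have hsym1 : (fun q => fderiv ℝ a q ((0 : ℝ), (1 : ℝ)))
      =ᶠ[𝓝 p] fun q => fderiv ℝ b q (1, 0) := by
    filter_upwards [hsym] with q hq using hq
  have e1 : fderiv ℝ (fun q => fderiv ℝ b q (0, 1)) p (1, 0)
      = fderiv ℝ (fun q => fderiv ℝ a q (0, 1)) p (0, 1) := by
    rw [pd_swap hbP (0, 1) (1, 0), ← hsym1.fderiv_eq]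
  have e2 : fderiv ℝ (fun q => fderiv ℝ a q (1, 0)) p (0, 1)
      = fderiv ℝ (fun q => fderiv ℝ b q (1, 0)) p (1, 0) := by
    rw [pd_swap haP (1, 0) (0, 1), hsym1.fderiv_eq]
  rw [e1, e2, hsymP]
  field_simp
  ring

/-- Partial derivative in the first coordinate direction of `f : ℝ × ℝ → ℝ`. -/
noncomputable def pdx (f : ℝ × ℝ → ℝ) (p : ℝ × ℝ) : ℝ := fderiv ℝ f p (1, 0)

/-- Partial derivative in the second coordinate direction of `f : ℝ × ℝ → ℝ`. -/
noncomputable def pdy (f : ℝ × ℝ → ℝ) (p : ℝ × ℝ) : ℝ := fderiv ℝ f p (0, 1)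

/-- The Euclidean Laplacian of `f : ℝ × ℝ → ℝ`. -/
noncomputable def lap (f : ℝ × ℝ → ℝ) (p : ℝ × ℝ) : ℝ := pdx (pdx f) p + pdy (pdy f) p

/-- Proposition 8.1 (smooth case): for a `C³` function `u` on an open set
`Ω ⊆ ℝ²` and a point `p ∈ Ω` with `∇u(p) ≠ 0`, one has
`Δ(log |∇u|)(p) = div((Δu/|∇u|²)·∇u)(p)`. -/
theorem laplacian_log_grad_identity (Ω : Set (ℝ × ℝ)) (hΩ : IsOpen Ω)
    (u : ℝ × ℝ → ℝ) (hu : ContDiffOn ℝ 3 u Ω)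
    (p : ℝ × ℝ) (hp : p ∈ Ω)
    (hgrad : (pdx u p, pdy u p) ≠ (0, 0)) :
    lap (fun q => Real.log (Real.sqrt ((pdx u q) ^ 2 + (pdy u q) ^ 2))) p =
      pdx (fun q => lap u q * pdx u q / ((pdx u q) ^ 2 + (pdy u q) ^ 2)) p +
        pdy (fun q => lap u q * pdy u q / ((pdx u q) ^ 2 + (pdy u q) ^ 2)) p := by
  have hC3 : ∀ᶠ q in 𝓝 p, ContDiffAt ℝ 3 u q := by
    filter_upwards [hΩ.mem_nhds hp] with q hq using hu.contDiffAt (hΩ.mem_nhds hq)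
  have ha : ∀ᶠ q in 𝓝 p, ContDiffAt ℝ 2 (fun r => fderiv ℝ u r ((1:ℝ), (0:ℝ))) q := by
    filter_upwards [hC3] with q hq
    exact (hq.fderiv_right (m := 2) (by norm_num)).clm_apply contDiffAt_const
  have hb : ∀ᶠ q in 𝓝 p, ContDiffAt ℝ 2 (fun r => fderiv ℝ u r ((0:ℝ), (1:ℝ))) q := by
    filter_upwards [hC3] with q hq
    exact (hq.fderiv_right (m := 2) (by norm_num)).clm_apply contDiffAt_const
  have hsym : ∀ᶠ q in 𝓝 p,
      fderiv ℝ (fun r => fderiv ℝ u r ((1:ℝ), (0:ℝ))) q (0, 1)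
        = fderiv ℝ (fun r => fderiv ℝ u r ((0:ℝ), (1:ℝ))) q (1, 0) := by
    filter_upwards [hC3] with q hq
    exact pd_swap (hq.of_le (by norm_num)) (1, 0) (0, 1)
  have hg' : ¬(fderiv ℝ u p (1, 0) = 0 ∧ fderiv ℝ u p (0, 1) = 0) := by
    intro h
    exact hgrad (by simp [pdx, pdy, h.1, h.2])
  have hne : fderiv ℝ u p (1, 0) ^ 2 + fderiv ℝ u p (0, 1) ^ 2 ≠ 0 := by
    intro hc
    have h1 : fderiv ℝ u p (1, 0) ^ 2 = 0 := by
      nlinarith [sq_nonneg (fderiv ℝ u p (1, 0)), sq_nonneg (fderiv ℝ u p (0, 1))]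
    have h2 : fderiv ℝ u p (0, 1) ^ 2 = 0 := by
      nlinarith [sq_nonneg (fderiv ℝ u p (1, 0)), sq_nonneg (fderiv ℝ u p (0, 1))]
    exact hg' ⟨by simpa using pow_eq_zero_iff (n := 2) (by norm_num) |>.mp h1,
      by simpa using pow_eq_zero_iff (n := 2) (by norm_num) |>.mp h2⟩
  have hcont : ContinuousAt
      (fun q => fderiv ℝ u q ((1:ℝ), (0:ℝ)) ^ 2 + fderiv ℝ u q ((0:ℝ), (1:ℝ)) ^ 2) p := by
    have h1 := (ha.self_of_nhds.differentiableAt two_ne_zero).continuousAt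
    have h2 := (hb.self_of_nhds.differentiableAt two_ne_zero).continuousAt
    exact (h1.pow 2).add (h2.pow 2)
  have hs : ∀ᶠ q in 𝓝 p,
      fderiv ℝ u q ((1:ℝ), (0:ℝ)) ^ 2 + fderiv ℝ u q ((0:ℝ), (1:ℝ)) ^ 2 ≠ 0 :=
    hcont.eventually_ne hne
  exact core _ _ p ha hb hsym hs
end
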